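/- arXiv:2009.09903 — 5 statements merged into one kernel-verified Lean document; each statement's English description precedes it below -/
import Mathlib

section
/- Let H be a weak Hopf algebra over a field k and let C be a k-coalgebra. If a linear map ρ:C→H⊗C, written ρ(c)=c⁽⁻¹⁾⊗c⁽⁰⁾, satisfies axioms (CC1), (CC2) and (CC3), then it automatically satisfies (CC4): for all c∈C, c⁽⁻¹⁾ε_C(c⁽⁰⁾)=ε_t(c⁽⁻¹⁾)ε_C(c⁽⁰⁾). -/
open TensorProduct

noncomputable section

variable (k : Type*) [Field k]
variable (H : Type*) [Ring H] [Algebra k H] [Coalgebra k H]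

/-- `ε_t(h) = ε(1₍₁₎h) 1₍₂₎`, as a linear map. -/
def epsT : H →ₗ[k] H :=
  (TensorProduct.lid k H).toLinearMap
    ∘ₗ TensorProduct.map (Coalgebra.counit : H →ₗ[k] k) (LinearMap.id : H →ₗ[k] H)
    ∘ₗ LinearMap.mulLeft k (Coalgebra.comul (R := k) (1 : H))
    ∘ₗ (TensorProduct.mk k H H).flip 1

/-- `ε_s(h) = 1₍₁₎ ε(h 1₍₂₎)`, as a linear map. -/
def epsS : H →ₗ[k] H :=
  (TensorProduct.rid k H).toLinearMap
    ∘ₗ TensorProduct.map (LinearMap.id : H →ₗ[k] H) (Coalgebra.counit : H →ₗ[k] k)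
    ∘ₗ LinearMap.mulRight k (Coalgebra.comul (R := k) (1 : H))
    ∘ₗ TensorProduct.mk k H H 1

/-- The functional `x ⊗ y ↦ ε(ax) ε(yc)`. -/
def epsPair (a c : H) : H ⊗[k] H →ₗ[k] k :=
  (TensorProduct.lid k k).toLinearMap
    ∘ₗ TensorProduct.map ((Coalgebra.counit : H →ₗ[k] k) ∘ₗ LinearMap.mulLeft k a)
        ((Coalgebra.counit : H →ₗ[k] k) ∘ₗ LinearMap.mulRight k c)

/-- The functional `x ⊗ y ↦ ε(ay) ε(xc)`. -/
def epsPair' (a c : H) : H ⊗[k] H →ₗ[k] k :=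
  (TensorProduct.lid k k).toLinearMap
    ∘ₗ TensorProduct.map ((Coalgebra.counit : H →ₗ[k] k) ∘ₗ LinearMap.mulRight k c)
        ((Coalgebra.counit : H →ₗ[k] k) ∘ₗ LinearMap.mulLeft k a)

/-- The weak bialgebra axioms for an algebra-and-coalgebra `H`. -/
def IsWeakBialgebra : Prop :=
  (∀ a b : H, Coalgebra.comul (R := k) (a * b) = Coalgebra.comul a * Coalgebra.comul b) ∧
  (∀ a b c : H,
    Coalgebra.counit (R := k) (a * b * c) = epsPair k H a c (Coalgebra.comul b)) ∧
  (∀ a b c : H,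
    Coalgebra.counit (R := k) (a * b * c) = epsPair' k H a c (Coalgebra.comul b)) ∧
  (((1 : H) ⊗ₜ[k] Coalgebra.comul (R := k) (1 : H)) *
      (TensorProduct.assoc k H H H (Coalgebra.comul (R := k) (1 : H) ⊗ₜ[k] (1 : H)))
    = TensorProduct.assoc k H H H
        (TensorProduct.map (Coalgebra.comul (R := k)) (LinearMap.id : H →ₗ[k] H)
          (Coalgebra.comul (R := k) (1 : H)))) ∧
  ((TensorProduct.assoc k H H H (Coalgebra.comul (R := k) (1 : H) ⊗ₜ[k] (1 : H))) *
      ((1 : H) ⊗ₜ[k] Coalgebra.comul (R := k) (1 : H))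
    = TensorProduct.assoc k H H H
        (TensorProduct.map (Coalgebra.comul (R := k)) (LinearMap.id : H →ₗ[k] H)
          (Coalgebra.comul (R := k) (1 : H))))

/-- The weak Hopf algebra axioms: `H` is a weak bialgebra and `S` is an antipode, i.e.
`h₁ S(h₂) = ε_t(h)`, `S(h₁) h₂ = ε_s(h)` and `S(h₁) h₂ S(h₃) = S(h)`. -/
def IsWeakHopfAlgebra (S : H →ₗ[k] H) : Prop :=
  IsWeakBialgebra k H ∧
  (∀ h : H, LinearMap.mul' k H
      (TensorProduct.map (LinearMap.id : H →ₗ[k] H) S (Coalgebra.comul (R := k) h))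
    = epsT k H h) ∧
  (∀ h : H, LinearMap.mul' k H
      (TensorProduct.map S (LinearMap.id : H →ₗ[k] H) (Coalgebra.comul (R := k) h))
    = epsS k H h) ∧
  (∀ h : H, LinearMap.mul' k H
      (TensorProduct.map (LinearMap.mul' k H ∘ₗ TensorProduct.map S (LinearMap.id : H →ₗ[k] H)) S
        (TensorProduct.map (Coalgebra.comul (R := k)) (LinearMap.id : H →ₗ[k] H)
          (Coalgebra.comul (R := k) h)))
    = S h)

variable (C : Type*) [AddCommGroup C] [Module k C] [Coalgebra k C]

/-- `(h ⊗ c) ⊗ (h' ⊗ c') ↦ hh' ⊗ (c ⊗ c')`. -/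
def mixHC : (H ⊗[k] C) ⊗[k] (H ⊗[k] C) →ₗ[k] H ⊗[k] (C ⊗[k] C) :=
  TensorProduct.map (LinearMap.mul' k H) (LinearMap.id : C ⊗[k] C →ₗ[k] C ⊗[k] C)
    ∘ₗ (TensorProduct.tensorTensorTensorComm k H C H C).toLinearMap

/-- (CC1): `ε_H(c⁽⁻¹⁾) c⁽⁰⁾ = c`. -/
def CC1 (ρ : C →ₗ[k] H ⊗[k] C) : Prop :=
  ∀ c : C, TensorProduct.lid k C
    (TensorProduct.map (Coalgebra.counit : H →ₗ[k] k) (LinearMap.id : C →ₗ[k] C) (ρ c)) = c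

/-- (CC2): `c⁽⁻¹⁾ ⊗ Δ_C(c⁽⁰⁾) = c₁⁽⁻¹⁾c₂⁽⁻¹⁾ ⊗ c₁⁽⁰⁾ ⊗ c₂⁽⁰⁾`. -/
def CC2 (ρ : C →ₗ[k] H ⊗[k] C) : Prop :=
  ∀ c : C, TensorProduct.map (LinearMap.id : H →ₗ[k] H) (Coalgebra.comul (R := k)) (ρ c)
    = mixHC k H C (TensorProduct.map ρ ρ (Coalgebra.comul c))

/-- (CC3): `c⁽⁻¹⁾ ⊗ ρ(c⁽⁰⁾) = (c⁽⁻¹⁾)₁ ⊗ (c⁽⁻¹⁾)₂ ⊗ c⁽⁰⁾`. -/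
def CC3 (ρ : C →ₗ[k] H ⊗[k] C) : Prop :=
  ∀ c : C, TensorProduct.map (LinearMap.id : H →ₗ[k] H) ρ (ρ c)
    = TensorProduct.assoc k H H C
        (TensorProduct.map (Coalgebra.comul (R := k)) (LinearMap.id : C →ₗ[k] C) (ρ c))

/-- (CC4): `c⁽⁻¹⁾ ε_C(c⁽⁰⁾) = ε_t(c⁽⁻¹⁾) ε_C(c⁽⁰⁾)`. -/
def CC4 (ρ : C →ₗ[k] H ⊗[k] C) : Prop :=
  ∀ c : C, TensorProduct.rid k H
      (TensorProduct.map (LinearMap.id : H →ₗ[k] H) (Coalgebra.counit : C →ₗ[k] k) (ρ c))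
    = TensorProduct.rid k H
      (TensorProduct.map (epsT k H) (Coalgebra.counit : C →ₗ[k] k) (ρ c))

/-- The right-hand side of (CCP3):
`c ↦ c₁⁽⁻¹⁾ε_C(c₁⁽⁰⁾)(c₂⁽⁻¹⁾)₁ ⊗ (c₂⁽⁻¹⁾)₂ ⊗ c₂⁽⁰⁾`. -/
def ccp3RHS (ρ : C →ₗ[k] H ⊗[k] C) : C →ₗ[k] H ⊗[k] (H ⊗[k] C) :=
  (TensorProduct.assoc k H H C).toLinearMap
  ∘ₗ TensorProduct.map
      (TensorProduct.map (LinearMap.mul' k H) (LinearMap.id : H →ₗ[k] H)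
        ∘ₗ (TensorProduct.assoc k H H H).symm.toLinearMap)
      (LinearMap.id : C →ₗ[k] C)
  ∘ₗ (TensorProduct.assoc k H (H ⊗[k] H) C).symm.toLinearMap
  ∘ₗ TensorProduct.map
      ((TensorProduct.rid k H).toLinearMap
        ∘ₗ TensorProduct.map (LinearMap.id : H →ₗ[k] H) (Coalgebra.counit : C →ₗ[k] k) ∘ₗ ρ)
      (TensorProduct.map (Coalgebra.comul (R := k)) (LinearMap.id : C →ₗ[k] C) ∘ₗ ρ)
  ∘ₗ (Coalgebra.comul (R := k) : C →ₗ[k] C ⊗[k] C)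

/-- The right-hand side of the symmetry condition:
`c ↦ (c₁⁽⁻¹⁾)₁c₂⁽⁻¹⁾ε_C(c₂⁽⁰⁾) ⊗ (c₁⁽⁻¹⁾)₂ ⊗ c₁⁽⁰⁾`. -/
def ccpSymRHS (ρ : C →ₗ[k] H ⊗[k] C) : C →ₗ[k] H ⊗[k] (H ⊗[k] C) :=
  (TensorProduct.assoc k H H C).toLinearMap
  ∘ₗ TensorProduct.map
      (TensorProduct.map (LinearMap.mul' k H ∘ₗ (TensorProduct.comm k H H).toLinearMap)
          (LinearMap.id : H →ₗ[k] H)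
        ∘ₗ (TensorProduct.assoc k H H H).symm.toLinearMap)
      (LinearMap.id : C →ₗ[k] C)
  ∘ₗ (TensorProduct.assoc k H (H ⊗[k] H) C).symm.toLinearMap
  ∘ₗ (TensorProduct.comm k ((H ⊗[k] H) ⊗[k] C) H).toLinearMap
  ∘ₗ TensorProduct.map
      (TensorProduct.map (Coalgebra.comul (R := k)) (LinearMap.id : C →ₗ[k] C) ∘ₗ ρ)
      ((TensorProduct.rid k H).toLinearMap
        ∘ₗ TensorProduct.map (LinearMap.id : H →ₗ[k] H) (Coalgebra.counit : C →ₗ[k] k) ∘ₗ ρ)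
  ∘ₗ (Coalgebra.comul (R := k) : C →ₗ[k] C ⊗[k] C)

/-- (CCP3). -/
def CCP3 (ρ : C →ₗ[k] H ⊗[k] C) : Prop :=
  ∀ c : C, TensorProduct.map (LinearMap.id : H →ₗ[k] H) ρ (ρ c) = ccp3RHS k H C ρ c

/-- The symmetry condition for a partial comodule coalgebra. -/
def CCPSym (ρ : C →ₗ[k] H ⊗[k] C) : Prop :=
  ∀ c : C, TensorProduct.map (LinearMap.id : H →ₗ[k] H) ρ (ρ c) = ccpSymRHS k H C ρ c

/-- `C` is a left `H`-comodule coalgebra via `ρ`. -/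
def IsComoduleCoalgebra (ρ : C →ₗ[k] H ⊗[k] C) : Prop :=
  CC1 k H C ρ ∧ CC2 k H C ρ ∧ CC3 k H C ρ ∧ CC4 k H C ρ

/-- `C` is a left partial `H`-comodule coalgebra via `ρ`. -/
def IsPartialComoduleCoalgebra (ρ : C →ₗ[k] H ⊗[k] C) : Prop :=
  CC1 k H C ρ ∧ CC2 k H C ρ ∧ CCP3 k H C ρ

/-- The smash coproduct `Δ̃(c ⊗ h) = (c₁ ⊗ c₂⁽⁻¹⁾h₁) ⊗ (c₂⁽⁰⁾ ⊗ h₂)`. -/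
def smashComul (ρ : C →ₗ[k] H ⊗[k] C) :
    C ⊗[k] H →ₗ[k] (C ⊗[k] H) ⊗[k] (C ⊗[k] H) :=
  TensorProduct.map
      (TensorProduct.map (LinearMap.id : C →ₗ[k] C) (LinearMap.mul' k H)
        ∘ₗ (TensorProduct.assoc k C H H).toLinearMap)
      (LinearMap.id : C ⊗[k] H →ₗ[k] C ⊗[k] H)
  ∘ₗ (TensorProduct.tensorTensorTensorComm k (C ⊗[k] H) C H H).toLinearMap
  ∘ₗ TensorProduct.map
      ((TensorProduct.assoc k C H C).symm.toLinearMap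
        ∘ₗ TensorProduct.map (LinearMap.id : C →ₗ[k] C) ρ
        ∘ₗ (Coalgebra.comul (R := k) : C →ₗ[k] C ⊗[k] C))
      (Coalgebra.comul (R := k) : H →ₗ[k] H ⊗[k] H)

/-- The smash counit `ε̂(c ⊗ h) = ε_C(c⁽⁰⁾) ε_H(c⁽⁻¹⁾h)`. -/
def smashCounit (ρ : C →ₗ[k] H ⊗[k] C) : C ⊗[k] H →ₗ[k] k :=
  (TensorProduct.lid k k).toLinearMap
  ∘ₗ TensorProduct.map (Coalgebra.counit : C →ₗ[k] k)
      ((Coalgebra.counit : H →ₗ[k] k) ∘ₗ LinearMap.mul' k H)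
  ∘ₗ (TensorProduct.assoc k C H H).toLinearMap
  ∘ₗ TensorProduct.map (TensorProduct.comm k H C).toLinearMap (LinearMap.id : H →ₗ[k] H)
  ∘ₗ TensorProduct.map ρ (LinearMap.id : H →ₗ[k] H)

/-- The projection `P(c ⊗ h) = c⁽⁰⁾ ⊗ h₂ ε_H(c⁽⁻¹⁾h₁)` onto the weak smash coproduct. -/
def smashP (ρ : C →ₗ[k] H ⊗[k] C) : C ⊗[k] H →ₗ[k] C ⊗[k] H :=
  (TensorProduct.lid k (C ⊗[k] H)).toLinearMap
  ∘ₗ TensorProduct.map ((Coalgebra.counit : H →ₗ[k] k) ∘ₗ LinearMap.mul' k H)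
      (LinearMap.id : C ⊗[k] H →ₗ[k] C ⊗[k] H)
  ∘ₗ (TensorProduct.tensorTensorTensorComm k H C H H).toLinearMap
  ∘ₗ TensorProduct.map ρ (Coalgebra.comul (R := k) : H →ₗ[k] H ⊗[k] H)

end

namespace CC4Aux

open TensorProduct LinearMap Coalgebra

variable (k : Type*) [Field k]

section Helpers

variable {A B : Type*} [Ring A] [Ring B] [Algebra k A] [Algebra k B]

lemma one_tmul_mul (u : B) (w : A ⊗[k] B) :
    ((1 : A) ⊗ₜ[k] u) * w = TensorProduct.map LinearMap.id (LinearMap.mulLeft k u) w := by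
  induction w using TensorProduct.induction_on with
  | zero => simp
  | tmul a b => simp [Algebra.TensorProduct.tmul_mul_tmul]
  | add x y hx hy => simp [mul_add, hx, hy]

lemma mul_tmul_one (b : A) (w : A ⊗[k] B) :
    w * (b ⊗ₜ[k] (1 : B)) = TensorProduct.map (LinearMap.mulRight k b) LinearMap.id w := by
  induction w using TensorProduct.induction_on with
  | zero => simp
  | tmul x y => simp [Algebra.TensorProduct.tmul_mul_tmul]
  | add x y hx hy => simp [add_mul, hx, hy]

end Helpers

section Assoc

variable {A B D : Type*} [AddCommGroup A] [AddCommGroup B] [AddCommGroup D]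
  [Module k A] [Module k B] [Module k D]

lemma assoc_tmul_right (z : D) (w : A ⊗[k] B) :
    (TensorProduct.assoc k A B D) (w ⊗ₜ[k] z)
      = TensorProduct.map LinearMap.id ((TensorProduct.mk k B D).flip z) w := by
  induction w using TensorProduct.induction_on with
  | zero => simp
  | tmul a b => simp
  | add x y hx hy => simp [add_tmul, hx, hy]

variable {M N P Q : Type*} [AddCommGroup M] [AddCommGroup N] [AddCommGroup P] [AddCommGroup Q]
  [Module k M] [Module k N] [Module k P] [Module k Q]

lemma map_id_map_id (f : N →ₗ[k] P) (g : P →ₗ[k] Q) (w : M ⊗[k] N) :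
    TensorProduct.map LinearMap.id g (TensorProduct.map LinearMap.id f w)
      = TensorProduct.map LinearMap.id (g ∘ₗ f) w := by
  rw [← LinearMap.comp_apply, ← TensorProduct.map_comp, LinearMap.id_comp]

lemma map_map_id (f : M →ₗ[k] P) (g : P →ₗ[k] Q) (w : M ⊗[k] N) :
    TensorProduct.map g LinearMap.id (TensorProduct.map f LinearMap.id w)
      = TensorProduct.map (g ∘ₗ f) LinearMap.id w := by
  rw [← LinearMap.comp_apply, ← TensorProduct.map_comp, LinearMap.id_comp]

end Assoc

end CC4Aux

namespace CC4Aux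

open TensorProduct LinearMap Coalgebra

set_option linter.unusedSectionVars false
set_option maxRecDepth 4000

variable (k : Type*) [Field k]
variable (H : Type*) [Ring H] [Algebra k H] [Coalgebra k H]
variable (C : Type*) [AddCommGroup C] [Module k C] [Coalgebra k C]

/-- Contraction `h ⊗ d ↦ ε_C(d) • h`. -/
noncomputable def lamHat : H ⊗[k] C →ₗ[k] H :=
  (TensorProduct.rid k H).toLinearMap
    ∘ₗ TensorProduct.map (LinearMap.id : H →ₗ[k] H) (Coalgebra.counit : C →ₗ[k] k)

@[simp] lemma lamHat_tmul (h : H) (d : C) :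
    lamHat k H C (h ⊗ₜ[k] d) = (Coalgebra.counit (R := k) d) • h := by
  simp [lamHat]

/-- `λ(c) = c⁽⁻¹⁾ ε_C(c⁽⁰⁾)`. -/
noncomputable def lam (ρ : C →ₗ[k] H ⊗[k] C) : C →ₗ[k] H := lamHat k H C ∘ₗ ρ

lemma lam_apply (ρ : C →ₗ[k] H ⊗[k] C) (c : C) :
    lam k H C ρ c = lamHat k H C (ρ c) := rfl

lemma mixHC_tmul (h g : H) (x y : C) :
    mixHC k H C ((h ⊗ₜ[k] x) ⊗ₜ[k] (g ⊗ₜ[k] y)) = (h * g) ⊗ₜ[k] (x ⊗ₜ[k] y) := by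
  simp [mixHC, TensorProduct.tensorTensorTensorComm_tmul]

variable (ρ : C →ₗ[k] H ⊗[k] C)

/-- FACT1 : `Δ(λ c) = c⁽⁻¹⁾ ⊗ λ(c⁽⁰⁾)`. -/
lemma fact1 (h3 : CC3 k H C ρ) (c : C) :
    Coalgebra.comul (R := k) (lam k H C ρ c)
      = TensorProduct.map LinearMap.id (lam k H C ρ) (ρ c) := by
  have e := congrArg (TensorProduct.map (LinearMap.id : H →ₗ[k] H) (lamHat k H C)) (h3 c)
  rw [map_id_map_id] at e
  have e2 : TensorProduct.map LinearMap.id (lam k H C ρ) (ρ c)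
      = TensorProduct.map LinearMap.id (lamHat k H C)
          ((TensorProduct.assoc k H H C)
            ((TensorProduct.map (Coalgebra.comul (R := k)) LinearMap.id) (ρ c))) := e
  rw [lam_apply, e2]
  generalize (ρ c) = w
  induction w using TensorProduct.induction_on with
  | zero => simp
  | tmul h d =>
      simp only [TensorProduct.map_tmul, LinearMap.id_apply, lamHat_tmul, map_smul]
      generalize Coalgebra.comul (R := k) h = w'
      induction w' using TensorProduct.induction_on with
      | zero => simp
      | tmul u v => simp [TensorProduct.assoc_tmul, TensorProduct.smul_tmul', tmul_smul]
      | add x y hx hy => simp [add_tmul, map_add, hx, hy, smul_add]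
  | add x y hx hy => simp only [map_add, hx, hy]

/-- `L_C (x ⊗ y) = (λ(x)·y⁽⁻¹⁾) ⊗ y⁽⁰⁾`. -/
noncomputable def LC : C ⊗[k] C →ₗ[k] H ⊗[k] C :=
  TensorProduct.map (LinearMap.mul' k H) LinearMap.id
    ∘ₗ (TensorProduct.assoc k H H C).symm.toLinearMap
    ∘ₗ TensorProduct.map (lam k H C ρ) ρ

/-- `(h ⊗ d) ⊗ v ↦ (h*v) ⊗ d`. -/
noncomputable def rearrR : (H ⊗[k] C) ⊗[k] H →ₗ[k] H ⊗[k] C :=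
  TensorProduct.map (LinearMap.mul' k H) LinearMap.id
    ∘ₗ (TensorProduct.assoc k H H C).symm.toLinearMap
    ∘ₗ TensorProduct.map LinearMap.id (TensorProduct.comm k C H).toLinearMap
    ∘ₗ (TensorProduct.assoc k H C H).toLinearMap

@[simp] lemma rearrR_tmul (h : H) (d : C) (v : H) :
    rearrR k H C ((h ⊗ₜ[k] d) ⊗ₜ[k] v) = (h * v) ⊗ₜ[k] d := by
  simp [rearrR, TensorProduct.assoc_tmul, TensorProduct.assoc_symm_tmul]

/-- `R_C (x ⊗ y) = (x⁽⁻¹⁾·λ(y)) ⊗ x⁽⁰⁾`. -/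
noncomputable def RC : C ⊗[k] C →ₗ[k] H ⊗[k] C :=
  rearrR k H C ∘ₗ TensorProduct.map ρ (lam k H C ρ)

/-- FACT2 : `ρ(c) = λ(c₁) c₂⁽⁻¹⁾ ⊗ c₂⁽⁰⁾`. -/
lemma fact2 (h2 : CC2 k H C ρ) (c : C) :
    ρ c = LC k H C ρ (Coalgebra.comul (R := k) c) := by
  have e := congrArg
    (TensorProduct.map (LinearMap.id : H →ₗ[k] H)
      ((TensorProduct.lid k C).toLinearMap ∘ₗ
        TensorProduct.map (Coalgebra.counit : C →ₗ[k] k) LinearMap.id)) (h2 c)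
  have eL : TensorProduct.map (LinearMap.id : H →ₗ[k] H)
      ((TensorProduct.lid k C).toLinearMap ∘ₗ
        TensorProduct.map (Coalgebra.counit : C →ₗ[k] k) LinearMap.id)
      (TensorProduct.map LinearMap.id (Coalgebra.comul (R := k)) (ρ c)) = ρ c := by
    rw [map_id_map_id]
    generalize (ρ c) = w
    induction w using TensorProduct.induction_on with
    | zero => simp
    | tmul h d =>
        simp only [TensorProduct.map_tmul, LinearMap.id_apply, LinearMap.comp_apply]
        congr 1
        have h1 := Coalgebra.rTensor_counit_comul (R := k) d
        rw [show TensorProduct.map (Coalgebra.counit : C →ₗ[k] k) (LinearMap.id : C →ₗ[k] C)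
              = LinearMap.rTensor C (Coalgebra.counit : C →ₗ[k] k) from rfl, h1]
        simp
    | add x y hx hy => simp only [map_add, hx, hy]
  rw [eL] at e
  rw [e, LC]
  simp only [LinearMap.comp_apply, LinearEquiv.coe_coe]
  generalize Coalgebra.comul (R := k) c = w
  induction w using TensorProduct.induction_on with
  | zero => simp
  | tmul x y =>
      simp only [TensorProduct.map_tmul, lam_apply]
      generalize (ρ x) = w1
      generalize (ρ y) = w2
      induction w1 using TensorProduct.induction_on with
      | zero => simp
      | tmul h xx =>
          induction w2 using TensorProduct.induction_on with
          | zero => simp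
          | tmul g yy =>
              rw [mixHC_tmul, lamHat_tmul]
              simp only [TensorProduct.map_tmul, LinearMap.id_apply, LinearMap.comp_apply,
                LinearEquiv.coe_coe, TensorProduct.lid_tmul, TensorProduct.smul_tmul',
                TensorProduct.assoc_symm_tmul, map_smul, TensorProduct.map_tmul,
                LinearMap.mul'_apply, tmul_smul, smul_mul_assoc, mul_smul_comm]
          | add a b ha hb =>
              simp only [tmul_add, map_add] at ha hb ⊢
              rw [ha, hb]
      | add a b ha hb =>
          simp only [add_tmul, map_add] at ha hb ⊢
          rw [ha, hb]
  | add x y hx hy =>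
      simp only [map_add] at hx hy ⊢
      rw [hx, hy]

/-- FACT3 : `ρ(c) = c₁⁽⁻¹⁾ λ(c₂) ⊗ c₁⁽⁰⁾`. -/
lemma fact3 (h2 : CC2 k H C ρ) (c : C) :
    ρ c = RC k H C ρ (Coalgebra.comul (R := k) c) := by
  have e := congrArg
    (TensorProduct.map (LinearMap.id : H →ₗ[k] H)
      ((TensorProduct.rid k C).toLinearMap ∘ₗ
        TensorProduct.map LinearMap.id (Coalgebra.counit : C →ₗ[k] k))) (h2 c)
  have eL : TensorProduct.map (LinearMap.id : H →ₗ[k] H)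
      ((TensorProduct.rid k C).toLinearMap ∘ₗ
        TensorProduct.map LinearMap.id (Coalgebra.counit : C →ₗ[k] k))
      (TensorProduct.map LinearMap.id (Coalgebra.comul (R := k)) (ρ c)) = ρ c := by
    rw [map_id_map_id]
    generalize (ρ c) = w
    induction w using TensorProduct.induction_on with
    | zero => simp
    | tmul h d =>
        simp only [TensorProduct.map_tmul, LinearMap.id_apply, LinearMap.comp_apply]
        congr 1
        have h1 := Coalgebra.lTensor_counit_comul (R := k) d
        rw [show TensorProduct.map (LinearMap.id : C →ₗ[k] C) (Coalgebra.counit : C →ₗ[k] k)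
              = LinearMap.lTensor C (Coalgebra.counit : C →ₗ[k] k) from rfl, h1]
        simp
    | add x y hx hy => simp only [map_add, hx, hy]
  rw [eL] at e
  rw [e, RC]
  simp only [LinearMap.comp_apply, LinearEquiv.coe_coe]
  generalize Coalgebra.comul (R := k) c = w
  induction w using TensorProduct.induction_on with
  | zero => simp
  | tmul x y =>
      simp only [TensorProduct.map_tmul, lam_apply]
      generalize (ρ x) = w1
      generalize (ρ y) = w2
      induction w1 using TensorProduct.induction_on with
      | zero => simp
      | tmul h xx =>
          induction w2 using TensorProduct.induction_on with
          | zero => simp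
          | tmul g yy =>
              rw [mixHC_tmul, lamHat_tmul, rearrR_tmul]
              simp only [TensorProduct.map_tmul, LinearMap.id_apply, LinearMap.comp_apply,
                LinearEquiv.coe_coe, TensorProduct.rid_tmul, tmul_smul, map_smul,
                TensorProduct.smul_tmul', smul_mul_assoc, mul_smul_comm]
          | add a b ha hb =>
              simp only [tmul_add, map_add] at ha hb ⊢
              rw [ha, hb]
      | add a b ha hb =>
          simp only [add_tmul, map_add] at ha hb ⊢
          rw [ha, hb]
  | add x y hx hy =>
      simp only [map_add] at hx hy ⊢
      rw [hx, hy]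

end CC4Aux

namespace CC4Aux

open TensorProduct LinearMap Coalgebra

set_option linter.unusedSectionVars false
set_option maxRecDepth 4000

variable (k : Type*) [Field k]
variable (H : Type*) [Ring H] [Algebra k H] [Coalgebra k H]

/-- `F_a(y) = ε(a₁ y) a₂`. -/
noncomputable def Fa (a : H) : H →ₗ[k] H :=
  ((TensorProduct.lid k H).toLinearMap
      ∘ₗ TensorProduct.map (Coalgebra.counit : H →ₗ[k] k) LinearMap.id)
    ∘ₗ (LinearMap.mulLeft k (Coalgebra.comul (R := k) a)
      ∘ₗ (TensorProduct.mk k H H).flip 1)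

lemma Fa_apply (a y : H) :
    Fa k H a y = (TensorProduct.lid k H)
      (TensorProduct.map (Coalgebra.counit : H →ₗ[k] k) LinearMap.id
        ((Coalgebra.comul (R := k) a) * (y ⊗ₜ[k] 1))) := by
  simp [Fa, LinearMap.mulLeft_apply]

/-- The weak-bialgebra identity `1₁ ⊗ ε(a₁ 1₂) a₂ = 1₁ ⊗ a 1₂`  (FACT4). -/
lemma fact4
    (hmul : ∀ a b : H, Coalgebra.comul (R := k) (a * b)
      = Coalgebra.comul a * Coalgebra.comul b)
    (hiii : ((1 : H) ⊗ₜ[k] Coalgebra.comul (R := k) (1 : H)) *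
      (TensorProduct.assoc k H H H (Coalgebra.comul (R := k) (1 : H) ⊗ₜ[k] (1 : H)))
    = TensorProduct.assoc k H H H
        (TensorProduct.map (Coalgebra.comul (R := k)) (LinearMap.id : H →ₗ[k] H)
          (Coalgebra.comul (R := k) (1 : H))))
    (a : H) :
    TensorProduct.map LinearMap.id (Fa k H a) (Coalgebra.comul (R := k) (1 : H))
      = TensorProduct.map LinearMap.id (LinearMap.mulLeft k a)
          (Coalgebra.comul (R := k) (1 : H)) := by
  have hB : (TensorProduct.assoc k H H H)
      (TensorProduct.map (Coalgebra.comul (R := k)) (LinearMap.id : H →ₗ[k] H)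
        (Coalgebra.comul (R := k) (1 : H)))
      = TensorProduct.map LinearMap.id (Coalgebra.comul (R := k))
          (Coalgebra.comul (R := k) (1 : H)) := by
    have h := Coalgebra.coassoc_apply (R := k) (1 : H)
    rw [show TensorProduct.map (Coalgebra.comul (R := k)) (LinearMap.id : H →ₗ[k] H)
          = LinearMap.rTensor H (Coalgebra.comul (R := k) (A := H)) from rfl,
        show TensorProduct.map (LinearMap.id : H →ₗ[k] H) (Coalgebra.comul (R := k))
          = LinearMap.lTensor H (Coalgebra.comul (R := k) (A := H)) from rfl]
    exact h
  have e1 : ((1 : H) ⊗ₜ[k] Coalgebra.comul (R := k) a) *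
      (TensorProduct.assoc k H H H (Coalgebra.comul (R := k) (1 : H) ⊗ₜ[k] (1 : H)))
      = TensorProduct.map LinearMap.id
          (LinearMap.mulLeft k (Coalgebra.comul (R := k) a)
            ∘ₗ (TensorProduct.mk k H H).flip 1)
          (Coalgebra.comul (R := k) (1 : H)) := by
    rw [assoc_tmul_right, one_tmul_mul, map_id_map_id]
  have e2 : ((1 : H) ⊗ₜ[k] Coalgebra.comul (R := k) a) *
      (TensorProduct.assoc k H H H (Coalgebra.comul (R := k) (1 : H) ⊗ₜ[k] (1 : H)))
      = TensorProduct.map LinearMap.id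
          (LinearMap.mulLeft k (Coalgebra.comul (R := k) a) ∘ₗ Coalgebra.comul (R := k))
          (Coalgebra.comul (R := k) (1 : H)) := by
    calc ((1 : H) ⊗ₜ[k] Coalgebra.comul (R := k) a) *
        (TensorProduct.assoc k H H H (Coalgebra.comul (R := k) (1 : H) ⊗ₜ[k] (1 : H)))
        = (((1 : H) ⊗ₜ[k] Coalgebra.comul (R := k) a) *
            ((1 : H) ⊗ₜ[k] Coalgebra.comul (R := k) (1 : H))) *
          (TensorProduct.assoc k H H H (Coalgebra.comul (R := k) (1 : H) ⊗ₜ[k] (1 : H))) := by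
          rw [Algebra.TensorProduct.tmul_mul_tmul, one_mul, ← hmul, mul_one]
      _ = ((1 : H) ⊗ₜ[k] Coalgebra.comul (R := k) a) *
          (((1 : H) ⊗ₜ[k] Coalgebra.comul (R := k) (1 : H)) *
            (TensorProduct.assoc k H H H (Coalgebra.comul (R := k) (1 : H) ⊗ₜ[k] (1 : H)))) := by
          rw [mul_assoc]
      _ = ((1 : H) ⊗ₜ[k] Coalgebra.comul (R := k) a) *
          (TensorProduct.map LinearMap.id (Coalgebra.comul (R := k))
            (Coalgebra.comul (R := k) (1 : H))) := by rw [hiii, hB]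
      _ = TensorProduct.map LinearMap.id (LinearMap.mulLeft k (Coalgebra.comul (R := k) a))
            (TensorProduct.map LinearMap.id (Coalgebra.comul (R := k))
              (Coalgebra.comul (R := k) (1 : H))) := by rw [one_tmul_mul]
      _ = TensorProduct.map LinearMap.id
            (LinearMap.mulLeft k (Coalgebra.comul (R := k) a) ∘ₗ Coalgebra.comul (R := k))
            (Coalgebra.comul (R := k) (1 : H)) := by rw [map_id_map_id]
  have e3 := congrArg (TensorProduct.map (LinearMap.id : H →ₗ[k] H)
      ((TensorProduct.lid k H).toLinearMap
        ∘ₗ TensorProduct.map (Coalgebra.counit : H →ₗ[k] k) LinearMap.id)) (e1.symm.trans e2)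
  rw [map_id_map_id, map_id_map_id] at e3
  have e4 : ((TensorProduct.lid k H).toLinearMap
        ∘ₗ TensorProduct.map (Coalgebra.counit : H →ₗ[k] k) LinearMap.id)
      ∘ₗ (LinearMap.mulLeft k (Coalgebra.comul (R := k) a) ∘ₗ Coalgebra.comul (R := k))
      = LinearMap.mulLeft k a := by
    apply LinearMap.ext
    intro b
    simp only [LinearMap.comp_apply, LinearMap.mulLeft_apply, ← hmul]
    have h := Coalgebra.rTensor_counit_comul (R := k) (a * b)
    rw [show TensorProduct.map (Coalgebra.counit : H →ₗ[k] k) (LinearMap.id : H →ₗ[k] H)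
          = LinearMap.rTensor H (Coalgebra.counit : H →ₗ[k] k) from rfl, h]
    simp
  rw [e4] at e3
  exact e3

/-- FACT5 : `ε(a₁ b) a₂ = a ε_t(b)`. -/
lemma fact5
    (hmul : ∀ a b : H, Coalgebra.comul (R := k) (a * b)
      = Coalgebra.comul a * Coalgebra.comul b)
    (hiii : ((1 : H) ⊗ₜ[k] Coalgebra.comul (R := k) (1 : H)) *
      (TensorProduct.assoc k H H H (Coalgebra.comul (R := k) (1 : H) ⊗ₜ[k] (1 : H)))
    = TensorProduct.assoc k H H H
        (TensorProduct.map (Coalgebra.comul (R := k)) (LinearMap.id : H →ₗ[k] H)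
          (Coalgebra.comul (R := k) (1 : H))))
    (hpair' : ∀ a b c : H,
      Coalgebra.counit (R := k) (a * b * c) = epsPair' k H a c (Coalgebra.comul b))
    (a b : H) :
    (TensorProduct.lid k H)
      (TensorProduct.map ((Coalgebra.counit : H →ₗ[k] k) ∘ₗ LinearMap.mulRight k b)
        LinearMap.id (Coalgebra.comul (R := k) a))
      = a * epsT k H b := by
  set Phib : H ⊗[k] H →ₗ[k] H :=
    (TensorProduct.lid k H).toLinearMap
      ∘ₗ TensorProduct.map ((Coalgebra.counit : H →ₗ[k] k) ∘ₗ LinearMap.mulRight k b)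
          LinearMap.id with hPhib
  have hPhib_tmul : ∀ (u v : H), Phib (u ⊗ₜ[k] v) = (Coalgebra.counit (R := k) (u * b)) • v := by
    intro u v
    simp [hPhib]
  show Phib (Coalgebra.comul (R := k) a) = a * epsT k H b
  obtain ⟨ind, l, r, heq⟩ := Coalgebra.Repr.arbitrary k a
  -- step 1
  have s1 : Phib (Coalgebra.comul (R := k) a)
      = ∑ i ∈ ind, (Coalgebra.counit (R := k) (l i * b)) • r i := by
    rw [← heq, map_sum]
    exact Finset.sum_congr rfl fun i _ => hPhib_tmul (l i) (r i)
  -- step 2 : the weak counit axiom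
  have s2 : ∀ x : H, Coalgebra.counit (R := k) (x * b)
      = epsPair' k H x b (Coalgebra.comul (R := k) (1 : H)) := by
    intro x
    have := hpair' x 1 b
    rwa [mul_one] at this
  -- the auxiliary linear map
  set Xi : H ⊗[k] H →ₗ[k] H :=
    ∑ i ∈ ind, (epsPair' k H (l i) b).smulRight (r i) with hXi
  have s3 : Phib (Coalgebra.comul (R := k) a)
      = Xi (Coalgebra.comul (R := k) (1 : H)) := by
    rw [s1, hXi]
    simp only [LinearMap.coe_sum, Finset.sum_apply, LinearMap.smulRight_apply]
    exact Finset.sum_congr rfl fun i _ => by rw [s2 (l i)]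
  have hFa : ∀ v : H, Fa k H a v
      = ∑ i ∈ ind, (Coalgebra.counit (R := k) (l i * v)) • r i := by
    intro v
    rw [Fa_apply, ← heq, Finset.sum_mul]
    simp [Algebra.TensorProduct.tmul_mul_tmul, map_sum]
  have s4 : Xi = Phib ∘ₗ TensorProduct.map LinearMap.id (Fa k H a) := by
    apply TensorProduct.ext'
    intro u v
    simp only [hXi, LinearMap.coe_sum, Finset.sum_apply, LinearMap.smulRight_apply,
      LinearMap.comp_apply, TensorProduct.map_tmul, LinearMap.id_apply]
    rw [hFa v, hPhib_tmul]
    rw [Finset.smul_sum]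
    refine Finset.sum_congr rfl fun i _ => ?_
    rw [smul_smul]
    have hsc : (epsPair' k H (l i) b) (u ⊗ₜ[k] v)
        = Coalgebra.counit (R := k) (u * b) * Coalgebra.counit (R := k) (l i * v) := by
      simp [epsPair', smul_eq_mul]
    rw [hsc]

  have s5 : Phib (TensorProduct.map LinearMap.id (LinearMap.mulLeft k a)
      (Coalgebra.comul (R := k) (1 : H))) = a * Phib (Coalgebra.comul (R := k) (1 : H)) := by
    generalize Coalgebra.comul (R := k) (1 : H) = w
    induction w using TensorProduct.induction_on with
    | zero => simp
    | tmul u v =>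
        rw [TensorProduct.map_tmul, LinearMap.id_apply, LinearMap.mulLeft_apply,
          hPhib_tmul, hPhib_tmul, mul_smul_comm]
    | add x y hx hy => simp only [map_add, mul_add, hx, hy]
  have s6 : Phib (Coalgebra.comul (R := k) (1 : H)) = epsT k H b := by
    have : epsT k H b = (TensorProduct.lid k H)
        (TensorProduct.map (Coalgebra.counit : H →ₗ[k] k) LinearMap.id
          ((Coalgebra.comul (R := k) (1 : H)) * (b ⊗ₜ[k] 1))) := by
      simp [epsT, LinearMap.mulLeft_apply]
    rw [this, mul_tmul_one, map_map_id]
    rfl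
  rw [s3, s4]
  simp only [LinearMap.comp_apply]
  rw [fact4 k H hmul hiii a, s5, s6]

end CC4Aux



noncomputable section
variable (k : Type*) [Field k]
variable (H : Type*) [Ring H] [Algebra k H] [Coalgebra k H]
variable (C : Type*) [AddCommGroup C] [Module k C] [Coalgebra k C]

/-- If `H` is a weak Hopf algebra and `ρ : C → H ⊗ C` satisfies (CC1)-(CC3), then (CC4) holds. -/
theorem cc4_of_cc1_cc2_cc3 (S : H →ₗ[k] H) (hH : IsWeakHopfAlgebra k H S)
    (ρ : C →ₗ[k] H ⊗[k] C) (h1 : CC1 k H C ρ) (h2 : CC2 k H C ρ) (h3 : CC3 k H C ρ) :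
    CC4 k H C ρ := by
  obtain ⟨⟨hmul, hp1, hp2, hiiiA, hiiiB⟩, hS1, hS2, hS3⟩ := hH
  intro c
  have hL : (TensorProduct.rid k H)
      (TensorProduct.map LinearMap.id (Coalgebra.counit : C →ₗ[k] k) (ρ c))
      = CC4Aux.lam k H C ρ c := rfl
  have hR : (TensorProduct.rid k H)
      (TensorProduct.map (epsT k H) (Coalgebra.counit : C →ₗ[k] k) (ρ c))
      = epsT k H (CC4Aux.lam k H C ρ c) := by
    rw [CC4Aux.lam_apply]
    generalize (ρ c) = w
    induction w using TensorProduct.induction_on with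
    | zero => simp
    | tmul h d => simp
    | add x y hx hy =>
        simp only [map_add] at hx hy ⊢
        rw [hx, hy]
  rw [hL, hR]
  -- `κ(y) = ε_t(λ(y))` in coaction form
  have kappa : ∀ y : C,
      LinearMap.mul' k H (TensorProduct.map LinearMap.id S
        (TensorProduct.map LinearMap.id (CC4Aux.lam k H C ρ) (ρ y)))
      = epsT k H (CC4Aux.lam k H C ρ y) := by
    intro y
    rw [← CC4Aux.fact1 k H C ρ h3 y]
    exact hS1 (CC4Aux.lam k H C ρ y)
  have m0 := kappa c
  rw [CC4Aux.fact2 k H C ρ h2 c] at m0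
  have hLC : ∀ x y : C, CC4Aux.LC k H C ρ (x ⊗ₜ[k] y)
      = TensorProduct.map (LinearMap.mul' k H) LinearMap.id
          ((TensorProduct.assoc k H H C).symm ((CC4Aux.lam k H C ρ x) ⊗ₜ[k] (ρ y))) := by
    intro x y
    simp [CC4Aux.LC]
  have m2 : ∀ w : C ⊗[k] C,
      LinearMap.mul' k H (TensorProduct.map LinearMap.id S
        (TensorProduct.map LinearMap.id (CC4Aux.lam k H C ρ) (CC4Aux.LC k H C ρ w)))
      = LinearMap.mul' k H (TensorProduct.map (CC4Aux.lam k H C ρ)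
          ((epsT k H) ∘ₗ (CC4Aux.lam k H C ρ)) w) := by
    intro w
    induction w using TensorProduct.induction_on with
    | zero => simp
    | tmul x y =>
        rw [hLC x y]
        rw [TensorProduct.map_tmul, LinearMap.comp_apply]
        rw [← kappa y]
        generalize (ρ y) = w2
        induction w2 using TensorProduct.induction_on with
        | zero => simp
        | tmul g d =>
            simp only [TensorProduct.assoc_symm_tmul, TensorProduct.map_tmul,
              LinearMap.id_apply, LinearMap.mul'_apply, mul_assoc]
        | add p q hp hq =>
            simp only [tmul_add, map_add, mul_add] at hp hq ⊢
            rw [hp, hq]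
    | add p q hp hq =>
        simp only [map_add] at hp hq ⊢
        rw [hp, hq]
  have m3 : ∀ w : C ⊗[k] C,
      LinearMap.mul' k H (TensorProduct.map (CC4Aux.lam k H C ρ)
          ((epsT k H) ∘ₗ (CC4Aux.lam k H C ρ)) w)
      = CC4Aux.lam k H C ρ ((TensorProduct.lid k C)
          (TensorProduct.map (Coalgebra.counit : H →ₗ[k] k) LinearMap.id
            (CC4Aux.rearrR k H C
              (TensorProduct.map ρ (CC4Aux.lam k H C ρ) w)))) := by
    intro w
    induction w using TensorProduct.induction_on with
    | zero => simp
    | tmul x y =>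
        simp only [TensorProduct.map_tmul, LinearMap.comp_apply, LinearMap.mul'_apply]
        rw [← CC4Aux.fact5 k H hmul hiiiA hp2 (CC4Aux.lam k H C ρ x) (CC4Aux.lam k H C ρ y)]
        rw [CC4Aux.fact1 k H C ρ h3 x]
        generalize (ρ x) = w1
        induction w1 using TensorProduct.induction_on with
        | zero => simp
        | tmul h d =>
            simp only [TensorProduct.map_tmul, LinearMap.id_apply, LinearMap.comp_apply,
              CC4Aux.rearrR_tmul, TensorProduct.lid_tmul, LinearMap.mulRight_apply,
              map_smul]
        | add p q hp hq =>
            simp only [add_tmul, map_add] at hp hq ⊢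
            rw [hp, hq]
    | add p q hp hq =>
        simp only [map_add] at hp hq ⊢
        rw [hp, hq]
  have m4 : CC4Aux.rearrR k H C
      (TensorProduct.map ρ (CC4Aux.lam k H C ρ) (Coalgebra.comul (R := k) c)) = ρ c := by
    have h := CC4Aux.fact3 k H C ρ h2 c
    rw [show CC4Aux.RC k H C ρ (Coalgebra.comul (R := k) c)
        = CC4Aux.rearrR k H C
            (TensorProduct.map ρ (CC4Aux.lam k H C ρ) (Coalgebra.comul (R := k) c)) from rfl] at h
    exact h.symm
  have mfinal : epsT k H (CC4Aux.lam k H C ρ c) = CC4Aux.lam k H C ρ c := by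
    rw [← m0, m2 (Coalgebra.comul (R := k) c), m3 (Coalgebra.comul (R := k) c), m4]
    exact congrArg _ (h1 c)
  exact mfinal.symm

end
end

section
/- Let H be a weak Hopf algebra over a field k and let C be a left partial H-comodule coalgebra via ρ (i.e. ρ satisfies (CCP1)–(CCP3)). Then ρ makes C a (global) left H-comodule coalgebra, i.e. ρ additionally satisfies (CC3) and (CC4), if and only if c⁽⁻¹⁾ε_C(c⁽⁰⁾)=ε_t(c⁽⁻¹⁾)ε_C(c⁽⁰⁾) for all c∈C. -/
open TensorProduct

set_option synthInstance.maxHeartbeats 1000000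
set_option maxHeartbeats 1000000
set_option linter.unusedSectionVars false

noncomputable section PartialGlobalHelpers
open TensorProduct
variable (k : Type*) [Field k]
variable (H : Type*) [Ring H] [Algebra k H] [Coalgebra k H]
variable (C : Type*) [AddCommGroup C] [Module k C] [Coalgebra k C]

lemma epsT_eq (g : H) :
    epsT k H g = TensorProduct.lid k H
      (TensorProduct.map ((Coalgebra.counit : H →ₗ[k] k) ∘ₗ LinearMap.mulRight k g)
        (LinearMap.id : H →ₗ[k] H) (Coalgebra.comul (R := k) (1 : H))) := by
  have h : ∀ u : H ⊗[k] H,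
      TensorProduct.lid k H (TensorProduct.map (Coalgebra.counit : H →ₗ[k] k)
        (LinearMap.id : H →ₗ[k] H) (u * (g ⊗ₜ[k] (1:H)))) =
      TensorProduct.lid k H (TensorProduct.map
        ((Coalgebra.counit : H →ₗ[k] k) ∘ₗ LinearMap.mulRight k g)
        (LinearMap.id : H →ₗ[k] H) u) := by
    intro u
    induction u using TensorProduct.induction_on with
    | zero => simp
    | tmul a b => simp [Algebra.TensorProduct.tmul_mul_tmul]
    | add x y hx hy => simp only [add_mul, map_add, hx, hy]
  simpa [epsT, LinearMap.mulLeft_apply] using h (Coalgebra.comul (R := k) (1 : H))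

lemma comul_lid_map (φ : H →ₗ[k] k) (u : H ⊗[k] H) :
    Coalgebra.comul (R := k) (TensorProduct.lid k H
      (TensorProduct.map φ (LinearMap.id : H →ₗ[k] H) u))
    = TensorProduct.lid k (H ⊗[k] H) (TensorProduct.map φ LinearMap.id
        (TensorProduct.map (LinearMap.id : H →ₗ[k] H) (Coalgebra.comul (R := k)) u)) := by
  induction u using TensorProduct.induction_on with
  | zero => simp
  | tmul a b => simp
  | add x y hx hy => simp only [map_add, hx, hy]

lemma lid_map_mul_assoc (φ : H →ₗ[k] k) (u v : H ⊗[k] H) :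
    TensorProduct.lid k (H ⊗[k] H) (TensorProduct.map φ LinearMap.id
      ((TensorProduct.assoc k H H H (u ⊗ₜ[k] (1:H))) * ((1:H) ⊗ₜ[k] v)))
    = (TensorProduct.lid k H (TensorProduct.map φ (LinearMap.id : H →ₗ[k] H) u) ⊗ₜ[k] (1:H)) * v := by
  induction u using TensorProduct.induction_on with
  | zero => simp
  | tmul a b =>
    induction v using TensorProduct.induction_on with
    | zero => simp
    | tmul p q =>
      simp [Algebra.TensorProduct.tmul_mul_tmul, TensorProduct.smul_tmul', smul_mul_assoc]
    | add x y hx hy => simp only [TensorProduct.tmul_add, mul_add, map_add, hx, hy]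
  | add x y hx hy =>
    simp only [TensorProduct.add_tmul, map_add, add_mul, hx, hy]

lemma eq_one_three (hax : (TensorProduct.assoc k H H H
        (Coalgebra.comul (R := k) (1 : H) ⊗ₜ[k] (1 : H))) *
      ((1 : H) ⊗ₜ[k] Coalgebra.comul (R := k) (1 : H))
    = TensorProduct.assoc k H H H
        (TensorProduct.map (Coalgebra.comul (R := k)) (LinearMap.id : H →ₗ[k] H)
          (Coalgebra.comul (R := k) (1 : H)))) :
    TensorProduct.map (LinearMap.id : H →ₗ[k] H) (Coalgebra.comul (R := k))
      (Coalgebra.comul (R := k) (1 : H))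
    = (TensorProduct.assoc k H H H (Coalgebra.comul (R := k) (1 : H) ⊗ₜ[k] (1 : H))) *
        ((1 : H) ⊗ₜ[k] Coalgebra.comul (R := k) (1 : H)) := by
  rw [hax]
  have h := Coalgebra.coassoc_apply (R := k) (1 : H)
  simpa [LinearMap.rTensor, LinearMap.lTensor] using h.symm

lemma comul_epsT
    (hax : (TensorProduct.assoc k H H H
        (Coalgebra.comul (R := k) (1 : H) ⊗ₜ[k] (1 : H))) *
      ((1 : H) ⊗ₜ[k] Coalgebra.comul (R := k) (1 : H))
    = TensorProduct.assoc k H H H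
        (TensorProduct.map (Coalgebra.comul (R := k)) (LinearMap.id : H →ₗ[k] H)
          (Coalgebra.comul (R := k) (1 : H)))) (g : H) :
    Coalgebra.comul (R := k) (epsT k H g)
      = (epsT k H g ⊗ₜ[k] (1:H)) * Coalgebra.comul (R := k) (1:H) := by
  rw [epsT_eq k H g, comul_lid_map, eq_one_three k H hax, lid_map_mul_assoc, ← epsT_eq]

lemma comul_epsT_mul
    (hmul : ∀ a b : H, Coalgebra.comul (R := k) (a * b)
      = Coalgebra.comul a * Coalgebra.comul b)
    (hax : (TensorProduct.assoc k H H H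
        (Coalgebra.comul (R := k) (1 : H) ⊗ₜ[k] (1 : H))) *
      ((1 : H) ⊗ₜ[k] Coalgebra.comul (R := k) (1 : H))
    = TensorProduct.assoc k H H H
        (TensorProduct.map (Coalgebra.comul (R := k)) (LinearMap.id : H →ₗ[k] H)
          (Coalgebra.comul (R := k) (1 : H)))) (g a : H) :
    Coalgebra.comul (R := k) (epsT k H g * a)
      = (epsT k H g ⊗ₜ[k] (1:H)) * Coalgebra.comul (R := k) a := by
  rw [hmul, comul_epsT k H hax, mul_assoc, ← hmul, one_mul]

lemma rid_map_epsT (w : H ⊗[k] C) :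
    TensorProduct.rid k H (TensorProduct.map (epsT k H) (Coalgebra.counit : C →ₗ[k] k) w)
    = epsT k H (TensorProduct.rid k H
        (TensorProduct.map (LinearMap.id : H →ₗ[k] H) (Coalgebra.counit : C →ₗ[k] k) w)) := by
  induction w using TensorProduct.induction_on with
  | zero => simp
  | tmul a u => simp
  | add x y hx hy => simp only [map_add, hx, hy]

lemma psi_comul_id (w : H ⊗[k] C) :
    TensorProduct.map (LinearMap.id : H →ₗ[k] H)
      ((TensorProduct.lid k C).toLinearMap
        ∘ₗ TensorProduct.map (Coalgebra.counit : C →ₗ[k] k) (LinearMap.id : C →ₗ[k] C))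
      (TensorProduct.map (LinearMap.id : H →ₗ[k] H) (Coalgebra.comul (R := k)) w) = w := by
  induction w using TensorProduct.induction_on with
  | zero => simp
  | tmul a u =>
    have h := Coalgebra.rTensor_counit_comul (R := k) u
    simp only [LinearMap.rTensor] at h
    simp [h]
  | add x y hx hy => simp only [map_add, hx, hy]

lemma big_assoc (t : H) (p : H ⊗[k] H) (u : C) :
    TensorProduct.assoc k H H C (TensorProduct.map
      (TensorProduct.map (LinearMap.mul' k H) (LinearMap.id : H →ₗ[k] H)
        ∘ₗ (TensorProduct.assoc k H H H).symm.toLinearMap) (LinearMap.id : C →ₗ[k] C)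
      ((TensorProduct.assoc k H (H ⊗[k] H) C).symm (t ⊗ₜ[k] (p ⊗ₜ[k] u))))
    = TensorProduct.assoc k H H C (((t ⊗ₜ[k] (1:H)) * p) ⊗ₜ[k] u) := by
  induction p using TensorProduct.induction_on with
  | zero => simp
  | tmul p₁ p₂ => simp [Algebra.TensorProduct.tmul_mul_tmul]
  | add x y hx hy =>
    simp only [TensorProduct.tmul_add, TensorProduct.add_tmul, mul_add, map_add, hx, hy]

lemma map_mulLeft_add (t t' : H) (w : H ⊗[k] C) :
    TensorProduct.map (LinearMap.mulLeft k (t + t')) (LinearMap.id : C →ₗ[k] C) w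
    = TensorProduct.map (LinearMap.mulLeft k t) (LinearMap.id : C →ₗ[k] C) w
      + TensorProduct.map (LinearMap.mulLeft k t') (LinearMap.id : C →ₗ[k] C) w := by
  induction w using TensorProduct.induction_on with
  | zero => simp
  | tmul a u => simp [add_mul, TensorProduct.add_tmul]
  | add x y hx hy =>
    simp only [map_add, hx, hy]
    abel

lemma psi_mixHC (w₁ w₂ : H ⊗[k] C) :
    TensorProduct.map (LinearMap.id : H →ₗ[k] H)
      ((TensorProduct.lid k C).toLinearMap
        ∘ₗ TensorProduct.map (Coalgebra.counit : C →ₗ[k] k) (LinearMap.id : C →ₗ[k] C))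
      (mixHC k H C (w₁ ⊗ₜ[k] w₂))
    = TensorProduct.map (LinearMap.mulLeft k
        (TensorProduct.rid k H (TensorProduct.map (LinearMap.id : H →ₗ[k] H)
          (Coalgebra.counit : C →ₗ[k] k) w₁)))
        (LinearMap.id : C →ₗ[k] C) w₂ := by
  induction w₁ using TensorProduct.induction_on with
  | zero => simp [mixHC]
  | tmul a u =>
    induction w₂ using TensorProduct.induction_on with
    | zero => simp [mixHC]
    | tmul b v =>
      simp [mixHC, TensorProduct.tensorTensorTensorComm_tmul, smul_mul_assoc,
        TensorProduct.smul_tmul', TensorProduct.tmul_smul]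
    | add x y hx hy =>
      simp only [TensorProduct.tmul_add, map_add, hx, hy]
  | add x y hx hy =>
    simp only [TensorProduct.add_tmul, map_add, hx, hy, map_mulLeft_add]

lemma key_lemma
    (hmul : ∀ a b : H, Coalgebra.comul (R := k) (a * b)
      = Coalgebra.comul a * Coalgebra.comul b)
    (hax : (TensorProduct.assoc k H H H
        (Coalgebra.comul (R := k) (1 : H) ⊗ₜ[k] (1 : H))) *
      ((1 : H) ⊗ₜ[k] Coalgebra.comul (R := k) (1 : H))
    = TensorProduct.assoc k H H H
        (TensorProduct.map (Coalgebra.comul (R := k)) (LinearMap.id : H →ₗ[k] H)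
          (Coalgebra.comul (R := k) (1 : H)))) (g : H) (w : H ⊗[k] C) :
    TensorProduct.assoc k H H C (TensorProduct.map (Coalgebra.comul (R := k))
      (LinearMap.id : C →ₗ[k] C)
      (TensorProduct.map (LinearMap.mulLeft k (epsT k H g)) (LinearMap.id : C →ₗ[k] C) w))
    = TensorProduct.assoc k H H C (TensorProduct.map
        (TensorProduct.map (LinearMap.mul' k H) (LinearMap.id : H →ₗ[k] H)
          ∘ₗ (TensorProduct.assoc k H H H).symm.toLinearMap)
        (LinearMap.id : C →ₗ[k] C)
        ((TensorProduct.assoc k H (H ⊗[k] H) C).symm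
          (epsT k H g ⊗ₜ[k] (TensorProduct.map (Coalgebra.comul (R := k))
            (LinearMap.id : C →ₗ[k] C) w)))) := by
  induction w using TensorProduct.induction_on with
  | zero => simp
  | tmul a u =>
    simp only [TensorProduct.map_tmul, LinearMap.mulLeft_apply, LinearMap.id_coe, id_eq]
    rw [big_assoc, comul_epsT_mul k H hmul hax g a]
  | add x y hx hy =>
    simp only [map_add, TensorProduct.tmul_add, hx, hy]

end PartialGlobalHelpers

noncomputable section
variable (k : Type*) [Field k]
variable (H : Type*) [Ring H] [Algebra k H] [Coalgebra k H]
variable (C : Type*) [AddCommGroup C] [Module k C] [Coalgebra k C]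

/-- A left partial `H`-comodule coalgebra is a (global) left `H`-comodule coalgebra iff
`c⁽⁻¹⁾ ε_C(c⁽⁰⁾) = ε_t(c⁽⁻¹⁾) ε_C(c⁽⁰⁾)` for all `c`. -/
theorem partial_is_global_iff (S : H →ₗ[k] H) (hH : IsWeakHopfAlgebra k H S)
    (ρ : C →ₗ[k] H ⊗[k] C) (hρ : IsPartialComoduleCoalgebra k H C ρ) :
    IsComoduleCoalgebra k H C ρ ↔
      ∀ c : C,
        TensorProduct.rid k H
            (TensorProduct.map (LinearMap.id : H →ₗ[k] H) (Coalgebra.counit : C →ₗ[k] k) (ρ c))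
          = TensorProduct.rid k H
            (TensorProduct.map (epsT k H) (Coalgebra.counit : C →ₗ[k] k) (ρ c)) := by
  obtain ⟨hcc1, hcc2, hccp3⟩ := hρ
  obtain ⟨⟨hmul, _, _, _, hax⟩, _⟩ := hH
  constructor
  · exact fun h => h.2.2.2
  · intro hcc4
    refine ⟨hcc1, hcc2, ?_, hcc4⟩
    intro c
    rw [hccp3 c]
    have hrho : ρ c = TensorProduct.map (LinearMap.id : H →ₗ[k] H)
        ((TensorProduct.lid k C).toLinearMap
          ∘ₗ TensorProduct.map (Coalgebra.counit : C →ₗ[k] k) (LinearMap.id : C →ₗ[k] C))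
        (mixHC k H C (TensorProduct.map ρ ρ (Coalgebra.comul (R := k) c))) := by
      rw [← hcc2 c, psi_comul_id]
    conv_rhs => rw [hrho]
    simp only [ccp3RHS, LinearMap.coe_comp, LinearEquiv.coe_coe, Function.comp_apply]
    generalize Coalgebra.comul (R := k) c = z
    induction z using TensorProduct.induction_on with
    | zero => simp
    | tmul x y =>
      simp only [TensorProduct.map_tmul, LinearMap.coe_comp, LinearEquiv.coe_coe,
        Function.comp_apply]
      rw [psi_mixHC]
      have ht : TensorProduct.rid k H (TensorProduct.map (LinearMap.id : H →ₗ[k] H)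
          (Coalgebra.counit : C →ₗ[k] k) (ρ x))
          = epsT k H (TensorProduct.rid k H (TensorProduct.map (LinearMap.id : H →ₗ[k] H)
              (Coalgebra.counit : C →ₗ[k] k) (ρ x))) := by
        conv_lhs => rw [hcc4 x, rid_map_epsT]
      rw [ht]
      exact (key_lemma k H C hmul hax _ (ρ y)).symm
    | add x y hx hy =>
      simp only [map_add, hx, hy]


end
end

section
/- Let H be a weak Hopf algebra over a field k, let C be a nonzero k-coalgebra, and let h∈H. The linear map ρ_h:C→H⊗C defined by ρ_h(c)=h⊗c makes C a symmetric left partial H-comodule coalgebra if and only if ε_H(h)=1, (h⊗1)Δ_H(h)=h⊗h, and Δ_H(h)(h⊗1)=h⊗h. -/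
open TensorProduct

noncomputable section
variable (k : Type*) [Field k]
variable (H : Type*) [Ring H] [Algebra k H] [Coalgebra k H]
variable (C : Type*) [AddCommGroup C] [Module k C] [Coalgebra k C]

set_option maxHeartbeats 1000000
set_option synthInstance.maxHeartbeats 400000
set_option linter.unusedSectionVars false

/-- Over a field, right tensoring with a nonzero vector is injective. -/
lemma aux_tmul_right_cancel {M : Type*} [AddCommGroup M] [Module k M]
    {x y : M} {c : C} (hc : c ≠ 0) (hxy : x ⊗ₜ[k] c = y ⊗ₜ[k] c) : x = y := by
  obtain ⟨φ, hφ⟩ : ∃ φ : Module.Dual k C, φ c ≠ 0 := by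
    by_contra hcon
    push_neg at hcon
    exact hc ((Module.forall_dual_apply_eq_zero_iff k c).mp hcon)
  have h2 := congrArg (fun t => (TensorProduct.rid k M) (LinearMap.lTensor M φ t)) hxy
  simp only [LinearMap.lTensor_tmul, TensorProduct.rid_tmul] at h2
  exact smul_right_injective M hφ h2

lemma aux_mulleft (a : H) (X : H ⊗[k] H) :
    TensorProduct.map (LinearMap.mul' k H) (LinearMap.id : H →ₗ[k] H)
      ((TensorProduct.assoc k H H H).symm (a ⊗ₜ[k] X)) = (a ⊗ₜ[k] (1 : H)) * X := by
  induction X using TensorProduct.induction_on with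
  | zero => simp
  | tmul x y => simp [Algebra.TensorProduct.tmul_mul_tmul]
  | add u v hu hv => simp only [tmul_add, map_add, mul_add, hu, hv]

lemma aux_mulright (a : H) (X : H ⊗[k] H) :
    TensorProduct.map (LinearMap.mul' k H ∘ₗ (TensorProduct.comm k H H).toLinearMap)
        (LinearMap.id : H →ₗ[k] H)
      ((TensorProduct.assoc k H H H).symm (a ⊗ₜ[k] X)) = X * (a ⊗ₜ[k] (1 : H)) := by
  induction X using TensorProduct.induction_on with
  | zero => simp
  | tmul x y => simp [Algebra.TensorProduct.tmul_mul_tmul]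
  | add u v hu hv => simp only [tmul_add, map_add, add_mul, hu, hv]

lemma aux_rid_counit (a : H) (X : H ⊗[k] H) :
    TensorProduct.rid k H
        (TensorProduct.map (LinearMap.id : H →ₗ[k] H) (Coalgebra.counit : H →ₗ[k] k)
          ((a ⊗ₜ[k] (1 : H)) * X))
      = a * TensorProduct.rid k H
          (TensorProduct.map (LinearMap.id : H →ₗ[k] H) (Coalgebra.counit : H →ₗ[k] k) X) := by
  induction X using TensorProduct.induction_on with
  | zero => simp
  | tmul x y =>
      simp [Algebra.TensorProduct.tmul_mul_tmul, TensorProduct.rid_tmul, mul_smul_comm]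
  | add u v hu hv => simp only [mul_add, map_add, hu, hv]

lemma aux_mixHC (h : H) (t : C ⊗[k] C) :
    mixHC k H C (TensorProduct.map (TensorProduct.mk k H C h) (TensorProduct.mk k H C h) t)
      = (h * h) ⊗ₜ[k] t := by
  induction t using TensorProduct.induction_on with
  | zero => simp
  | tmul x y => simp [mixHC, tensorTensorTensorComm_tmul, LinearMap.mul'_apply]
  | add u v hu hv => simp only [tmul_add, map_add, hu, hv]

lemma aux_counit_smul_sum (c : C) (repr : Coalgebra.Repr k c (C × C)) :
    ∑ i ∈ repr.index, Coalgebra.counit (R := k) (repr.left i) • repr.right i = c := by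
  have h2 := congrArg (TensorProduct.lid k C) (Coalgebra.sum_counit_tmul_eq repr)
  rw [map_sum] at h2
  simp only [TensorProduct.lid_tmul, one_smul] at h2
  exact h2

lemma aux_smul_counit_sum (c : C) (repr : Coalgebra.Repr k c (C × C)) :
    ∑ i ∈ repr.index, Coalgebra.counit (R := k) (repr.right i) • repr.left i = c := by
  have h2 := congrArg (TensorProduct.rid k C) (Coalgebra.sum_tmul_counit_eq repr)
  rw [map_sum] at h2
  simp only [TensorProduct.rid_tmul, one_smul] at h2
  exact h2

lemma aux_ccp3RHS (h : H) (c : C) :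
    ccp3RHS k H C (TensorProduct.mk k H C h) c
      = TensorProduct.assoc k H H C
          (((h ⊗ₜ[k] (1 : H)) * Coalgebra.comul (R := k) h) ⊗ₜ[k] c) := by
  set repr := Coalgebra.Repr.arbitrary k c with hrepr
  have hc : Coalgebra.comul (R := k) c = ∑ i ∈ repr.index, repr.left i ⊗ₜ[k] repr.right i :=
    repr.eq.symm
  conv_rhs => rw [← aux_counit_smul_sum k C c repr, tmul_sum, map_sum]
  rw [ccp3RHS]
  simp only [LinearMap.coe_comp, Function.comp_apply, LinearEquiv.coe_coe, hc, map_sum]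
  refine Finset.sum_congr rfl (fun i _ => ?_)
  simp only [TensorProduct.map_tmul, LinearMap.coe_comp, Function.comp_apply,
    TensorProduct.mk_apply, LinearEquiv.coe_coe, LinearMap.id_coe, id_eq,
    TensorProduct.rid_tmul, TensorProduct.assoc_symm_tmul, TensorProduct.smul_tmul',
    map_smul, aux_mulleft, TensorProduct.tmul_smul]
  rw [← TensorProduct.smul_tmul', smul_mul_assoc]

lemma aux_ccpSymRHS (h : H) (c : C) :
    ccpSymRHS k H C (TensorProduct.mk k H C h) c
      = TensorProduct.assoc k H H C
          ((Coalgebra.comul (R := k) h * (h ⊗ₜ[k] (1 : H))) ⊗ₜ[k] c) := by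
  set repr := Coalgebra.Repr.arbitrary k c with hrepr
  have hc : Coalgebra.comul (R := k) c = ∑ i ∈ repr.index, repr.left i ⊗ₜ[k] repr.right i :=
    repr.eq.symm
  conv_rhs => rw [← aux_smul_counit_sum k C c repr, tmul_sum, map_sum]
  rw [ccpSymRHS]
  simp only [LinearMap.coe_comp, Function.comp_apply, LinearEquiv.coe_coe, hc, map_sum]
  refine Finset.sum_congr rfl (fun i _ => ?_)
  simp only [TensorProduct.map_tmul, LinearMap.coe_comp, Function.comp_apply,
    TensorProduct.mk_apply, LinearEquiv.coe_coe, LinearMap.id_coe, id_eq,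
    TensorProduct.rid_tmul, TensorProduct.comm_tmul, TensorProduct.assoc_symm_tmul,
    TensorProduct.smul_tmul', map_smul, aux_mulright, TensorProduct.tmul_smul]
  rw [← TensorProduct.smul_tmul', mul_smul_comm]

/-- `ρ_h(c) = h ⊗ c` makes a nonzero coalgebra `C` a symmetric left partial `H`-comodule
coalgebra iff `ε(h) = 1`, `(h ⊗ 1)Δ(h) = h ⊗ h` and `Δ(h)(h ⊗ 1) = h ⊗ h`. -/
theorem rho_h_symmetricPartial_iff (S : H →ₗ[k] H) (hH : IsWeakHopfAlgebra k H S)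
    [Nontrivial C] (h : H) :
    (IsPartialComoduleCoalgebra k H C (TensorProduct.mk k H C h) ∧
        CCPSym k H C (TensorProduct.mk k H C h)) ↔
      (Coalgebra.counit (R := k) h = 1 ∧
        (h ⊗ₜ[k] (1 : H)) * Coalgebra.comul (R := k) h = h ⊗ₜ[k] h ∧
        Coalgebra.comul (R := k) h * (h ⊗ₜ[k] (1 : H)) = h ⊗ₜ[k] h) := by
  obtain ⟨c₀, hc₀⟩ := exists_ne (0 : C)
  constructor
  · rintro ⟨⟨hcc1, hcc2, hcc3⟩, hsym⟩
    refine ⟨?_, ?_, ?_⟩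
    · have h1 := hcc1 c₀
      simp only [TensorProduct.mk_apply, TensorProduct.map_tmul, TensorProduct.lid_tmul,
        LinearMap.id_coe, id_eq] at h1
      have h0 : (Coalgebra.counit (R := k) h - 1) • c₀ = 0 := by
        rw [sub_smul, one_smul, h1, sub_self]
      rcases smul_eq_zero.mp h0 with h2 | h2
      · exact sub_eq_zero.mp h2
      · exact absurd h2 hc₀
    · have h3 := hcc3 c₀
      rw [aux_ccp3RHS] at h3
      simp only [TensorProduct.mk_apply, TensorProduct.map_tmul, LinearMap.id_coe, id_eq] at h3
      have h4 : TensorProduct.assoc k H H C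
            (((h ⊗ₜ[k] (1 : H)) * Coalgebra.comul (R := k) h) ⊗ₜ[k] c₀)
          = TensorProduct.assoc k H H C ((h ⊗ₜ[k] h) ⊗ₜ[k] c₀) := by
        rw [TensorProduct.assoc_tmul]
        exact h3.symm
      exact aux_tmul_right_cancel k C hc₀ ((TensorProduct.assoc k H H C).injective h4)
    · have h3 := hsym c₀
      rw [aux_ccpSymRHS] at h3
      simp only [TensorProduct.mk_apply, TensorProduct.map_tmul, LinearMap.id_coe, id_eq] at h3
      have h4 : TensorProduct.assoc k H H C
            ((Coalgebra.comul (R := k) h * (h ⊗ₜ[k] (1 : H))) ⊗ₜ[k] c₀)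
          = TensorProduct.assoc k H H C ((h ⊗ₜ[k] h) ⊗ₜ[k] c₀) := by
        rw [TensorProduct.assoc_tmul]
        exact h3.symm
      exact aux_tmul_right_cancel k C hc₀ ((TensorProduct.assoc k H H C).injective h4)
  · rintro ⟨e1, e2, e3⟩
    have hh : h * h = h := by
      have h1 := congrArg (fun t => TensorProduct.rid k H
        (TensorProduct.map (LinearMap.id : H →ₗ[k] H) (Coalgebra.counit : H →ₗ[k] k) t)) e2
      rw [aux_rid_counit] at h1
      have hl : TensorProduct.map (LinearMap.id : H →ₗ[k] H) (Coalgebra.counit : H →ₗ[k] k)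
          (Coalgebra.comul (R := k) h) = h ⊗ₜ[k] (1 : k) := by
        have := Coalgebra.lTensor_counit_comul (R := k) h
        rwa [show LinearMap.lTensor H (Coalgebra.counit : H →ₗ[k] k)
          = TensorProduct.map (LinearMap.id : H →ₗ[k] H) (Coalgebra.counit : H →ₗ[k] k)
          from rfl] at this
      rw [hl] at h1
      simp only [TensorProduct.map_tmul, LinearMap.id_coe, id_eq, TensorProduct.rid_tmul,
        one_smul, e1] at h1
      exact h1
    refine ⟨⟨?_, ?_, ?_⟩, ?_⟩
    · intro c
      simp only [TensorProduct.mk_apply, TensorProduct.map_tmul, TensorProduct.lid_tmul,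
        LinearMap.id_coe, id_eq, e1, one_smul]
    · intro c
      simp only [TensorProduct.mk_apply, TensorProduct.map_tmul, LinearMap.id_coe, id_eq]
      rw [aux_mixHC, hh]
    · intro c
      rw [aux_ccp3RHS, e2, TensorProduct.assoc_tmul]
      simp only [TensorProduct.mk_apply, TensorProduct.map_tmul, LinearMap.id_coe, id_eq]
    · intro c
      rw [aux_ccpSymRHS, e3, TensorProduct.assoc_tmul]
      simp only [TensorProduct.mk_apply, TensorProduct.map_tmul, LinearMap.id_coe, id_eq]

end
end

section
/- Let H be a weak Hopf algebra over a field k and let h∈H satisfy ε_H(h)=1, (h⊗1)Δ_H(h)=h⊗h, and ε_t(h)=h. Then Δ_H(h)=h⊗h. -/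
open TensorProduct

noncomputable section
variable (k : Type*) [Field k]
variable (H : Type*) [Ring H] [Algebra k H] [Coalgebra k H]


set_option synthInstance.maxHeartbeats 400000
set_option maxHeartbeats 1000000

lemma aux_rid_mul (a : H) (x : H ⊗[k] H) :
    (TensorProduct.rid k H)
        (TensorProduct.map (LinearMap.id : H →ₗ[k] H) (Coalgebra.counit : H →ₗ[k] k)
          ((a ⊗ₜ[k] (1 : H)) * x))
      = a * (TensorProduct.rid k H)
        (TensorProduct.map (LinearMap.id : H →ₗ[k] H) (Coalgebra.counit : H →ₗ[k] k) x) := by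
  induction x using TensorProduct.induction_on with
  | zero => simp
  | tmul u v => simp [mul_smul_comm]
  | add x y hx hy => simp [mul_add, hx, hy]

lemma aux_comul_lid (x : H ⊗[k] H) :
    Coalgebra.comul (R := k)
        ((TensorProduct.lid k H)
          (TensorProduct.map (Coalgebra.counit : H →ₗ[k] k) (LinearMap.id : H →ₗ[k] H) x))
      = (TensorProduct.lid k (H ⊗[k] H))
          (TensorProduct.map (Coalgebra.counit : H →ₗ[k] k)
            (Coalgebra.comul : H →ₗ[k] H ⊗[k] H) x) := by
  induction x using TensorProduct.induction_on with
  | zero => simp only [map_zero, LinearEquiv.map_zero]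
  | tmul u v => simp
  | add x y hx hy => simp only [map_add, LinearEquiv.map_add, hx, hy]

lemma aux_mulRight (h : H) (x : H ⊗[k] H) :
    TensorProduct.map (Coalgebra.counit : H →ₗ[k] k)
        (Coalgebra.comul : H →ₗ[k] H ⊗[k] H) (x * (h ⊗ₜ[k] (1 : H)))
      = TensorProduct.map ((Coalgebra.counit : H →ₗ[k] k) ∘ₗ LinearMap.mulRight k h)
        (Coalgebra.comul : H →ₗ[k] H ⊗[k] H) x := by
  induction x using TensorProduct.induction_on with
  | zero => simp
  | tmul u v => simp
  | add x y hx hy => simp [add_mul, hx, hy]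

lemma aux_final (h : H) (x : H ⊗[k] H) :
    (TensorProduct.lid k (H ⊗[k] H))
        (TensorProduct.map ((Coalgebra.counit : H →ₗ[k] k) ∘ₗ LinearMap.mulRight k h)
          (LinearMap.id : H ⊗[k] H →ₗ[k] H ⊗[k] H)
          (TensorProduct.assoc k H H H (x ⊗ₜ[k] (1 : H)) *
            ((1 : H) ⊗ₜ[k] Coalgebra.comul (R := k) (1 : H))))
      = ((TensorProduct.lid k H)
          (TensorProduct.map (Coalgebra.counit : H →ₗ[k] k) (LinearMap.id : H →ₗ[k] H)
            (x * (h ⊗ₜ[k] (1 : H)))) ⊗ₜ[k] (1 : H)) * Coalgebra.comul (R := k) (1 : H) := by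
  induction x using TensorProduct.induction_on with
  | zero =>
      simp only [TensorProduct.zero_tmul, map_zero, LinearEquiv.map_zero, zero_mul, mul_zero]
  | tmul u v =>
      simp only [TensorProduct.assoc_tmul, Algebra.TensorProduct.tmul_mul_tmul, mul_one, one_mul,
        TensorProduct.map_tmul, LinearMap.coe_comp, Function.comp_apply,
        LinearMap.mulRight_apply, LinearMap.id_coe, id_eq, TensorProduct.lid_tmul]
      rw [← TensorProduct.smul_tmul', smul_mul_assoc]
  | add x y hx hy =>
      simp only [TensorProduct.add_tmul, map_add, add_mul, hx, hy]

/-- If `h` in a weak Hopf algebra satisfies `ε(h) = 1`, `(h ⊗ 1)Δ(h) = h ⊗ h` and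
`ε_t(h) = h`, then `Δ(h) = h ⊗ h`. -/
theorem comul_grouplike_of_partial_grouplike_target (S : H →ₗ[k] H)
    (hH : IsWeakHopfAlgebra k H S) (h : H)
    (h1 : Coalgebra.counit (R := k) h = 1)
    (h2 : (h ⊗ₜ[k] (1 : H)) * Coalgebra.comul (R := k) h = h ⊗ₜ[k] h)
    (h3 : epsT k H h = h) :
    Coalgebra.comul (R := k) h = h ⊗ₜ[k] h := by
  have hax := hH.1.2.2.2.2
  -- Step A : `h * h = h`
  have hcu : (TensorProduct.rid k H)
      (TensorProduct.map (LinearMap.id : H →ₗ[k] H) (Coalgebra.counit : H →ₗ[k] k)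
        (Coalgebra.comul (R := k) h)) = h := by
    rw [show (TensorProduct.map (LinearMap.id : H →ₗ[k] H) (Coalgebra.counit : H →ₗ[k] k))
        = (Coalgebra.counit (R := k)).lTensor H from rfl, Coalgebra.lTensor_counit_comul]
    simp
  have hidem : h * h = h := by
    have e := congrArg (fun x => (TensorProduct.rid k H)
      (TensorProduct.map (LinearMap.id : H →ₗ[k] H) (Coalgebra.counit : H →ₗ[k] k) x)) h2
    simp only [aux_rid_mul, hcu] at e
    simpa [h1] using e
  -- Step B : `Δ h = (h ⊗ 1) * Δ 1`
  have e0 : epsT k H h = (TensorProduct.lid k H)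
      (TensorProduct.map (Coalgebra.counit : H →ₗ[k] k) (LinearMap.id : H →ₗ[k] H)
        (Coalgebra.comul (R := k) (1 : H) * (h ⊗ₜ[k] (1 : H)))) := rfl
  have e2 : TensorProduct.map (LinearMap.id : H →ₗ[k] H)
        (Coalgebra.comul : H →ₗ[k] H ⊗[k] H) (Coalgebra.comul (R := k) (1 : H))
      = TensorProduct.assoc k H H H (Coalgebra.comul (R := k) (1 : H) ⊗ₜ[k] (1 : H)) *
          ((1 : H) ⊗ₜ[k] Coalgebra.comul (R := k) (1 : H)) := by
    rw [hax]
    exact (Coalgebra.coassoc_apply (1 : H)).symm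
  have e3 : TensorProduct.map ((Coalgebra.counit : H →ₗ[k] k) ∘ₗ LinearMap.mulRight k h)
        (Coalgebra.comul : H →ₗ[k] H ⊗[k] H) (Coalgebra.comul (R := k) (1 : H))
      = TensorProduct.map ((Coalgebra.counit : H →ₗ[k] k) ∘ₗ LinearMap.mulRight k h)
          (LinearMap.id : H ⊗[k] H →ₗ[k] H ⊗[k] H)
          (TensorProduct.map (LinearMap.id : H →ₗ[k] H)
            (Coalgebra.comul : H →ₗ[k] H ⊗[k] H) (Coalgebra.comul (R := k) (1 : H))) := by
    conv_rhs => rw [← LinearMap.comp_apply, ← TensorProduct.map_comp]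
    rw [LinearMap.comp_id, LinearMap.id_comp]
  have hB : Coalgebra.comul (R := k) h
      = (h ⊗ₜ[k] (1 : H)) * Coalgebra.comul (R := k) (1 : H) := by
    conv_lhs => rw [← h3, e0]
    rw [aux_comul_lid, aux_mulRight, e3, e2, aux_final, ← e0, h3]
  -- Step C : conclude
  have hC : (h ⊗ₜ[k] (1 : H)) * Coalgebra.comul (R := k) h = Coalgebra.comul (R := k) h := by
    rw [hB, ← mul_assoc, Algebra.TensorProduct.tmul_mul_tmul, hidem, one_mul]
  rw [← h2, hC]

end
end

section
/- Let H be a weak Hopf algebra over a field k and let C be a left H-comodule coalgebra via ρ. Then for all c∈C and h∈H, Δ̃(P(c⊗h))=(P⊗P)(Δ̃(c⊗h)); explicitly, Δ̃(c×h)=(c₁×c₂⁽⁻¹⁾h₁)⊗(c₂⁽⁰⁾×h₂). -/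
open TensorProduct

set_option linter.unusedSectionVars false
set_option maxHeartbeats 1000000
set_option synthInstance.maxHeartbeats 400000

noncomputable section SmashAux
variable (k : Type*) [Field k]
variable (H : Type*) [Ring H] [Algebra k H] [Coalgebra k H]
variable (C : Type*) [AddCommGroup C] [Module k C] [Coalgebra k C]

local notation "δ" => (Coalgebra.comul (R := k) (A := H))
local notation "δC" => (Coalgebra.comul (R := k) (A := C))
local notation "ε" => (Coalgebra.counit (R := k) (A := H))
local notation "μ" => (LinearMap.mul' k H)
local notation "μ₂" => (LinearMap.mul' k (H ⊗[k] H))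

theorem mapmap {M N P Q V W : Type*} [AddCommMonoid M] [Module k M] [AddCommMonoid N] [Module k N]
    [AddCommMonoid P] [Module k P] [AddCommMonoid Q] [Module k Q]
    [AddCommMonoid V] [Module k V] [AddCommMonoid W] [Module k W]
    (f₂ : P →ₗ[k] V) (f₁ : M →ₗ[k] P) (g₂ : Q →ₗ[k] W) (g₁ : N →ₗ[k] Q) (x : M ⊗[k] N) :
    TensorProduct.map f₂ g₂ (TensorProduct.map f₁ g₁ x)
      = TensorProduct.map (f₂ ∘ₗ f₁) (g₂ ∘ₗ g₁) x := by
  rw [← LinearMap.comp_apply, ← TensorProduct.map_comp]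

def P0 : (H ⊗[k] C) ⊗[k] (H ⊗[k] H) →ₗ[k] C ⊗[k] H :=
  (TensorProduct.lid k (C ⊗[k] H)).toLinearMap
  ∘ₗ TensorProduct.map (ε ∘ₗ μ) LinearMap.id
  ∘ₗ (tensorTensorTensorComm k H C H H).toLinearMap

def K0 : (C ⊗[k] (H ⊗[k] C)) ⊗[k] (H ⊗[k] H) →ₗ[k] (C ⊗[k] H) ⊗[k] (C ⊗[k] H) :=
  TensorProduct.map
      (TensorProduct.map LinearMap.id μ ∘ₗ (TensorProduct.assoc k C H H).toLinearMap)
      LinearMap.id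
  ∘ₗ (tensorTensorTensorComm k (C ⊗[k] H) C H H).toLinearMap
  ∘ₗ TensorProduct.map (TensorProduct.assoc k C H C).symm.toLinearMap LinearMap.id

def F1 : (H ⊗[k] (C ⊗[k] (H ⊗[k] C))) ⊗[k] (H ⊗[k] (H ⊗[k] H))
    →ₗ[k] (C ⊗[k] H) ⊗[k] (C ⊗[k] H) :=
  (TensorProduct.lid k ((C ⊗[k] H) ⊗[k] (C ⊗[k] H))).toLinearMap
  ∘ₗ TensorProduct.map (ε ∘ₗ μ) (K0 k H C)
  ∘ₗ (tensorTensorTensorComm k H (C ⊗[k] (H ⊗[k] C)) H (H ⊗[k] H)).toLinearMap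

theorem F1_tmul (a : H) (w : C ⊗[k] (H ⊗[k] C)) (g : H) (y : H ⊗[k] H) :
    F1 k H C ((a ⊗ₜ[k] w) ⊗ₜ[k] (g ⊗ₜ[k] y)) = ε (a * g) • K0 k H C (w ⊗ₜ[k] y) := by
  simp [F1]

def N1 : (H ⊗[k] C) ⊗[k] (H ⊗[k] (H ⊗[k] C)) →ₗ[k] H ⊗[k] (C ⊗[k] (H ⊗[k] C)) :=
  TensorProduct.map μ LinearMap.id
  ∘ₗ (tensorTensorTensorComm k H C H (H ⊗[k] C)).toLinearMap

theorem N1_tmul (b : H) (u : C) (a : H) (z : H ⊗[k] C) :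
    N1 k H C ((b ⊗ₜ[k] u) ⊗ₜ[k] (a ⊗ₜ[k] z)) = (b * a) ⊗ₜ[k] (u ⊗ₜ[k] z) := by
  simp [N1]

def Wm : ((H ⊗[k] C) ⊗[k] (H ⊗[k] (H ⊗[k] C))) ⊗[k] (H ⊗[k] H)
    →ₗ[k] ((H ⊗[k] C) ⊗[k] (H ⊗[k] H)) ⊗[k] ((H ⊗[k] C) ⊗[k] H) :=
  TensorProduct.map (TensorProduct.assoc k (H ⊗[k] C) H H).toLinearMap LinearMap.id
  ∘ₗ (tensorTensorTensorComm k ((H ⊗[k] C) ⊗[k] H) (H ⊗[k] C) H H).toLinearMap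
  ∘ₗ TensorProduct.map (TensorProduct.assoc k (H ⊗[k] C) H (H ⊗[k] C)).symm.toLinearMap
      LinearMap.id

theorem Wm_tmul (x : H ⊗[k] C) (b : H) (z : H ⊗[k] C) (g g' : H) :
    Wm k H C ((x ⊗ₜ[k] (b ⊗ₜ[k] z)) ⊗ₜ[k] (g ⊗ₜ[k] g'))
      = (x ⊗ₜ[k] (b ⊗ₜ[k] g)) ⊗ₜ[k] (z ⊗ₜ[k] g') := by
  simp [Wm]

def nuH : H ⊗[k] (H ⊗[k] H) →ₗ[k] H :=
  (TensorProduct.lid k H).toLinearMap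
  ∘ₗ TensorProduct.map (ε ∘ₗ μ) LinearMap.id
  ∘ₗ (TensorProduct.assoc k H H H).symm.toLinearMap

theorem nuH_tmul (x g g' : H) : nuH k H (x ⊗ₜ[k] (g ⊗ₜ[k] g')) = ε (x * g) • g' := by
  simp [nuH]

def xiH : (H ⊗[k] H) ⊗[k] H →ₗ[k] H ⊗[k] H :=
  TensorProduct.map ((TensorProduct.rid k H).toLinearMap ∘ₗ TensorProduct.map LinearMap.id ε)
    LinearMap.id

theorem xiH_tmul (x y g : H) :
    xiH k H ((x ⊗ₜ[k] y) ⊗ₜ[k] g) = ε y • (x ⊗ₜ[k] g) := by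
  simp [xiH, smul_tmul]

def PhiA2 : (H ⊗[k] H) ⊗[k] (H ⊗[k] (H ⊗[k] H)) →ₗ[k] H ⊗[k] H :=
  TensorProduct.map μ (nuH k H)
  ∘ₗ (tensorTensorTensorComm k H H H (H ⊗[k] H)).toLinearMap

def PhiB2 : H ⊗[k] (H ⊗[k] H) →ₗ[k] H ⊗[k] H :=
  TensorProduct.map μ LinearMap.id ∘ₗ (TensorProduct.assoc k H H H).symm.toLinearMap

def PhiA : H ⊗[k] H →ₗ[k] H ⊗[k] H :=
  PhiA2 k H ∘ₗ TensorProduct.map δ (TensorProduct.map LinearMap.id δ ∘ₗ δ)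

def PhiB : H ⊗[k] H →ₗ[k] H ⊗[k] H :=
  PhiB2 k H ∘ₗ TensorProduct.map LinearMap.id δ

def LamA : (H ⊗[k] (H ⊗[k] H)) ⊗[k] (H ⊗[k] (H ⊗[k] (H ⊗[k] H)))
    →ₗ[k] H ⊗[k] ((H ⊗[k] H) ⊗[k] (H ⊗[k] (H ⊗[k] H))) :=
  TensorProduct.map μ LinearMap.id
  ∘ₗ (tensorTensorTensorComm k H (H ⊗[k] H) H (H ⊗[k] (H ⊗[k] H))).toLinearMap

def Lam2 : (H ⊗[k] H) ⊗[k] (H ⊗[k] (H ⊗[k] H)) →ₗ[k] H ⊗[k] (H ⊗[k] (H ⊗[k] H)) :=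
  TensorProduct.map μ LinearMap.id
  ∘ₗ (tensorTensorTensorComm k H H H (H ⊗[k] H)).toLinearMap

def insM (b : H) (u v : C) : H ⊗[k] (H ⊗[k] H) →ₗ[k] (C ⊗[k] H) ⊗[k] (C ⊗[k] H) :=
  (TensorProduct.lid k ((C ⊗[k] H) ⊗[k] (C ⊗[k] H))).toLinearMap
  ∘ₗ TensorProduct.map (ε ∘ₗ LinearMap.mulLeft k b)
      (TensorProduct.map (TensorProduct.mk k C H u) (TensorProduct.mk k C H v))

theorem insM_tmul (b : H) (u v : C) (x y z : H) :
    insM k H C b u v (x ⊗ₜ[k] (y ⊗ₜ[k] z))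
      = ε (b * x) • ((u ⊗ₜ[k] y) ⊗ₜ[k] (v ⊗ₜ[k] z)) := by
  simp [insM]

def Imap (b : H) (u v : C) : (H ⊗[k] H) ⊗[k] (H ⊗[k] (H ⊗[k] H))
    →ₗ[k] (C ⊗[k] H) ⊗[k] (C ⊗[k] H) :=
  F1 k H C
  ∘ₗ TensorProduct.map
      (N1 k H C ∘ₗ TensorProduct.mk k (H ⊗[k] C) (H ⊗[k] (H ⊗[k] C)) (b ⊗ₜ[k] u)
        ∘ₗ (TensorProduct.assoc k H H C).toLinearMap
        ∘ₗ (TensorProduct.mk k (H ⊗[k] H) C).flip v)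
      LinearMap.id

theorem Imap_tmul (b : H) (u v : C) (p : H ⊗[k] H) (q : H ⊗[k] (H ⊗[k] H)) :
    Imap k H C b u v (p ⊗ₜ[k] q)
      = F1 k H C ((N1 k H C ((b ⊗ₜ[k] u) ⊗ₜ[k] TensorProduct.assoc k H H C (p ⊗ₜ[k] v)))
          ⊗ₜ[k] q) := by
  simp [Imap]

def Jmap (b : H) (u v : C) : ((H ⊗[k] H) ⊗[k] H) ⊗[k] ((H ⊗[k] H) ⊗[k] (H ⊗[k] H))
    →ₗ[k] (C ⊗[k] H) ⊗[k] (C ⊗[k] H) :=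
  TensorProduct.map (P0 k H C) (P0 k H C)
  ∘ₗ TensorProduct.map (TensorProduct.mk k (H ⊗[k] C) (H ⊗[k] H) (b ⊗ₜ[k] u)) LinearMap.id
  ∘ₗ TensorProduct.map μ₂ (TensorProduct.map ((TensorProduct.mk k H C).flip v) LinearMap.id)
  ∘ₗ (tensorTensorTensorComm k (H ⊗[k] H) H (H ⊗[k] H) (H ⊗[k] H)).toLinearMap

theorem Jmap_tmul (b : H) (u v : C) (s : H ⊗[k] H) (y : H) (t : H ⊗[k] H) (r : H ⊗[k] H) :
    Jmap k H C b u v ((s ⊗ₜ[k] y) ⊗ₜ[k] (t ⊗ₜ[k] r))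
      = P0 k H C ((b ⊗ₜ[k] u) ⊗ₜ[k] (s * t)) ⊗ₜ[k] P0 k H C ((y ⊗ₜ[k] v) ⊗ₜ[k] r) := by
  simp [Jmap]


/-- counit axiom, pointwise: `x₁ ε(x₂) = x`. -/
theorem counit_point (x : H) :
    (TensorProduct.rid k H) (TensorProduct.map LinearMap.id ε (δ x)) = x := by
  have := Coalgebra.lTensor_counit_comul (R := k) x
  rw [show (TensorProduct.map (LinearMap.id : H →ₗ[k] H) ε) = LinearMap.lTensor H ε from rfl]
  rw [this]
  simp

theorem xi_comul (t : H ⊗[k] H) :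
    xiH k H (TensorProduct.map δ LinearMap.id t) = t := by
  induction t using TensorProduct.induction_on with
  | zero => simp
  | add a b ha hb => simp only [map_add, ha, hb]
  | tmul x g => simp [xiH, counit_point k H x]

/-- coassociativity, pointwise, in `map` form. -/
theorem co1 (a : H) :
    TensorProduct.map δ LinearMap.id (δ a)
      = (TensorProduct.assoc k H H H).symm (TensorProduct.map LinearMap.id δ (δ a)) := by
  have := Coalgebra.coassoc_symm_apply (R := k) a
  rw [show (TensorProduct.map δ (LinearMap.id : H →ₗ[k] H)) = LinearMap.rTensor H δ from rfl,
    show (TensorProduct.map (LinearMap.id : H →ₗ[k] H) δ) = LinearMap.lTensor H δ from rfl]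
  exact this.symm

theorem gamma2a (s : H ⊗[k] H) (r : (H ⊗[k] H) ⊗[k] H) :
    PhiA2 k H (s ⊗ₜ[k] (TensorProduct.assoc k H H H r))
      = xiH k H (TensorProduct.map μ₂ LinearMap.id
          ((TensorProduct.assoc k (H ⊗[k] H) (H ⊗[k] H) H).symm (s ⊗ₜ[k] r))) := by
  induction s using TensorProduct.induction_on with
  | zero => simp
  | add a b ha hb => simp only [add_tmul, map_add, ha, hb]
  | tmul x1 x2 =>
    induction r using TensorProduct.induction_on with
    | zero => simp
    | add a b ha hb => simp only [map_add, add_tmul, tmul_add, ha, hb]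
    | tmul w g3 =>
      induction w using TensorProduct.induction_on with
      | zero => simp
      | add a b ha hb => simp only [add_tmul, tmul_add, map_add, ha, hb]
      | tmul g1 g2 =>
        simp [PhiA2, xiH, nuH, Algebra.TensorProduct.tmul_mul_tmul, smul_tmul, mul_assoc]

theorem gamma2b (x : H) (q : H ⊗[k] H) :
    (TensorProduct.assoc k (H ⊗[k] H) (H ⊗[k] H) H).symm
        (δ x ⊗ₜ[k] (TensorProduct.map δ LinearMap.id q))
      = TensorProduct.map (TensorProduct.map δ δ) LinearMap.id
          ((TensorProduct.assoc k H H H).symm (x ⊗ₜ[k] q)) := by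
  induction q using TensorProduct.induction_on with
  | zero => simp
  | add a b ha hb => simp only [map_add, add_tmul, tmul_add, ha, hb]
  | tmul g1 g2 => simp

theorem hmul_map (hmul : ∀ a b : H, δ (a * b) = δ a * δ b) (t : (H ⊗[k] H) ⊗[k] H) :
    TensorProduct.map μ₂ LinearMap.id (TensorProduct.map (TensorProduct.map δ δ) LinearMap.id t)
      = TensorProduct.map (δ ∘ₗ μ) LinearMap.id t := by
  induction t using TensorProduct.induction_on with
  | zero => simp
  | add a b ha hb => simp only [map_add, ha, hb]
  | tmul w g =>
    induction w using TensorProduct.induction_on with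
    | zero => simp
    | add a b ha hb => simp only [map_add, add_tmul, tmul_add, ha, hb]
    | tmul a b => simp [hmul a b]

theorem xi_dmu (t : (H ⊗[k] H) ⊗[k] H) :
    xiH k H (TensorProduct.map (δ ∘ₗ μ) LinearMap.id t)
      = TensorProduct.map μ LinearMap.id t := by
  induction t using TensorProduct.induction_on with
  | zero => simp
  | add a b ha hb => simp only [map_add, ha, hb]
  | tmul w g =>
    have : xiH k H ((δ (μ w)) ⊗ₜ[k] g) = (μ w) ⊗ₜ[k] g := by
      have h2 := xi_comul k H ((μ w) ⊗ₜ[k] g)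
      simpa using h2
    simpa using this

/-- Claim A : `Σ x₁g₁ ⊗ ε(x₂g₂) g₃ = Σ xg₁ ⊗ g₂`. -/
theorem claimA (hmul : ∀ a b : H, δ (a * b) = δ a * δ b) :
    PhiA k H = PhiB k H := by
  apply TensorProduct.ext'
  intro x g
  have e1 : PhiA k H (x ⊗ₜ[k] g)
      = PhiA2 k H (δ x ⊗ₜ[k] (TensorProduct.map LinearMap.id δ (δ g))) := by
    simp [PhiA]
  have e2 : TensorProduct.map LinearMap.id δ (δ g)
      = TensorProduct.assoc k H H H (TensorProduct.map δ LinearMap.id (δ g)) := by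
    rw [co1 k H g]; simp
  rw [e1, e2, gamma2a k H (δ x) (TensorProduct.map δ LinearMap.id (δ g)),
    gamma2b k H x (δ g), hmul_map k H hmul, xi_dmu k H]
  simp [PhiB, PhiB2]



theorem P0_tmul (a : H) (d : C) (g g' : H) :
    P0 k H C ((a ⊗ₜ[k] d) ⊗ₜ[k] (g ⊗ₜ[k] g')) = ε (a * g) • (d ⊗ₜ[k] g') := by
  simp [P0]

theorem K0_tmul (d : C) (b : H) (v : C) (g g' : H) :
    K0 k H C ((d ⊗ₜ[k] (b ⊗ₜ[k] v)) ⊗ₜ[k] (g ⊗ₜ[k] g'))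
      = (d ⊗ₜ[k] (b * g)) ⊗ₜ[k] (v ⊗ₜ[k] g') := by
  simp [K0]

theorem lamA_eq (p q : H ⊗[k] H) :
    TensorProduct.map LinearMap.id
        (TensorProduct.map δ (TensorProduct.map LinearMap.id δ ∘ₗ δ))
        (TensorProduct.map μ LinearMap.id ((tensorTensorTensorComm k H H H H) (p ⊗ₜ[k] q)))
      = LamA k H ((TensorProduct.map LinearMap.id δ) p ⊗ₜ[k]
          (TensorProduct.map LinearMap.id (TensorProduct.map LinearMap.id δ ∘ₗ δ)) q) := by
  induction p using TensorProduct.induction_on with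
  | zero => simp
  | add a b ha hb => simp only [map_add, add_tmul, tmul_add, ha, hb]
  | tmul x y =>
    induction q using TensorProduct.induction_on with
    | zero => simp
    | add a b ha hb => simp only [map_add, add_tmul, tmul_add, ha, hb]
    | tmul g g' => simp [LamA]

theorem lam2_eq (p q : H ⊗[k] H) :
    TensorProduct.map LinearMap.id (TensorProduct.map LinearMap.id δ)
        (TensorProduct.map μ LinearMap.id ((tensorTensorTensorComm k H H H H) (p ⊗ₜ[k] q)))
      = Lam2 k H (p ⊗ₜ[k] (TensorProduct.map LinearMap.id δ) q) := by
  induction p using TensorProduct.induction_on with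
  | zero => simp
  | add a b ha hb => simp only [map_add, add_tmul, tmul_add, ha, hb]
  | tmul x y =>
    induction q using TensorProduct.induction_on with
    | zero => simp
    | add a b ha hb => simp only [map_add, add_tmul, tmul_add, ha, hb]
    | tmul g g' => simp [Lam2]

theorem regroup (q₁ : H ⊗[k] (H ⊗[k] H)) :
    TensorProduct.map LinearMap.id δ ((TensorProduct.assoc k H H H).symm q₁)
      = (TensorProduct.assoc k H H (H ⊗[k] H)).symm
          (TensorProduct.map LinearMap.id (TensorProduct.map LinearMap.id δ) q₁) := by
  induction q₁ using TensorProduct.induction_on with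
  | zero => simp
  | add a b ha hb => simp only [map_add, ha, hb]
  | tmul x w =>
    induction w using TensorProduct.induction_on with
    | zero => simp
    | add a b ha hb => simp only [map_add, add_tmul, tmul_add, ha, hb]
    | tmul y z => simp

theorem gamma_main (b : H) (u v : C) (p₁ : H ⊗[k] (H ⊗[k] H)) (q₂ : H ⊗[k] (H ⊗[k] (H ⊗[k] H))) :
    Jmap k H C b u v ((TensorProduct.assoc k H H H).symm p₁ ⊗ₜ[k]
        (TensorProduct.assoc k H H (H ⊗[k] H)).symm q₂)
      = insM k H C b u v
          (TensorProduct.map LinearMap.id (PhiA2 k H) (LamA k H (p₁ ⊗ₜ[k] q₂))) := by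
  induction p₁ using TensorProduct.induction_on with
  | zero => simp
  | add a b ha hb => simp only [map_add, add_tmul, tmul_add, ha, hb]
  | tmul x w =>
    induction w using TensorProduct.induction_on with
    | zero => simp
    | add a b ha hb => simp only [map_add, add_tmul, tmul_add, ha, hb]
    | tmul y y' =>
      induction q₂ using TensorProduct.induction_on with
      | zero => simp
      | add a b ha hb => simp only [map_add, add_tmul, tmul_add, ha, hb]
      | tmul g w2 =>
        induction w2 using TensorProduct.induction_on with
        | zero => simp
        | add a b ha hb => simp only [map_add, add_tmul, tmul_add, ha, hb]
        | tmul g2 w3 =>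
          induction w3 using TensorProduct.induction_on with
          | zero => simp
          | add a b ha hb => simp only [map_add, add_tmul, tmul_add, ha, hb]
          | tmul g3 g4 =>
            simp [Jmap_tmul, P0_tmul, insM_tmul, LamA, PhiA2, nuH,
              Algebra.TensorProduct.tmul_mul_tmul, mul_assoc, smul_tmul, tmul_smul,
              smul_smul, mul_comm, mul_left_comm]

theorem gamma3 (b : H) (u v : C) (p : H ⊗[k] H) (q₁ : H ⊗[k] (H ⊗[k] H)) :
    Imap k H C b u v (p ⊗ₜ[k] q₁)
      = insM k H C b u v
          (TensorProduct.map LinearMap.id (PhiB2 k H) (Lam2 k H (p ⊗ₜ[k] q₁))) := by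
  induction p using TensorProduct.induction_on with
  | zero => simp
  | add a b ha hb => simp only [map_add, add_tmul, tmul_add, ha, hb]
  | tmul x y =>
    induction q₁ using TensorProduct.induction_on with
    | zero => simp
    | add a b ha hb => simp only [map_add, add_tmul, tmul_add, ha, hb]
    | tmul g w =>
      induction w using TensorProduct.induction_on with
      | zero => simp
      | add a b ha hb => simp only [map_add, add_tmul, tmul_add, ha, hb]
      | tmul w1 w2 =>
        simp [Imap, F1, N1, K0, insM, Lam2, PhiB2, mul_assoc]

theorem gamma_assemble (hmul : ∀ a b : H, δ (a * b) = δ a * δ b)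
    (b : H) (u v : C) (a h : H) :
    Jmap k H C b u v
        ((TensorProduct.map δ LinearMap.id) (δ a) ⊗ₜ[k] (TensorProduct.map δ δ) (δ h))
      = Imap k H C b u v (δ a ⊗ₜ[k] (TensorProduct.map LinearMap.id δ) (δ h)) := by
  have step2 : (TensorProduct.map δ δ) (δ h)
      = (TensorProduct.assoc k H H (H ⊗[k] H)).symm
          ((TensorProduct.map LinearMap.id (TensorProduct.map LinearMap.id δ))
            ((TensorProduct.map LinearMap.id δ) (δ h))) := by
    have h1 : (TensorProduct.map δ δ) (δ h)
        = TensorProduct.map LinearMap.id δ ((TensorProduct.map δ LinearMap.id) (δ h)) := by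
      rw [mapmap]; simp
    rw [h1, co1 k H h, regroup k H]
  rw [co1 k H a, step2,
    gamma_main k H C b u v ((TensorProduct.map LinearMap.id δ) (δ a))
      ((TensorProduct.map LinearMap.id (TensorProduct.map LinearMap.id δ))
        ((TensorProduct.map LinearMap.id δ) (δ h)))]
  have e3 : (TensorProduct.map LinearMap.id (TensorProduct.map LinearMap.id δ))
        ((TensorProduct.map LinearMap.id δ) (δ h))
      = (TensorProduct.map LinearMap.id (TensorProduct.map LinearMap.id δ ∘ₗ δ)) (δ h) := by
    rw [mapmap]; simp
  rw [e3, ← lamA_eq k H (δ a) (δ h)]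
  rw [gamma3 k H C b u v (δ a) ((TensorProduct.map LinearMap.id δ) (δ h)),
    ← lam2_eq k H (δ a) (δ h)]
  have hAB : ∀ X : H ⊗[k] (H ⊗[k] H),
      TensorProduct.map LinearMap.id (PhiA2 k H)
        (TensorProduct.map LinearMap.id
          (TensorProduct.map δ (TensorProduct.map LinearMap.id δ ∘ₗ δ)) X)
      = TensorProduct.map LinearMap.id (PhiB2 k H)
        (TensorProduct.map LinearMap.id (TensorProduct.map LinearMap.id δ) X) := by
    intro X
    simp only [mapmap, LinearMap.id_comp]
    rw [show PhiA2 k H ∘ₗ TensorProduct.map δ (TensorProduct.map LinearMap.id δ ∘ₗ δ)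
        = PhiB2 k H ∘ₗ TensorProduct.map LinearMap.id δ from claimA k H hmul]
  congr 1
  exact hAB _

theorem smashP_tmul (ρ : C →ₗ[k] H ⊗[k] C) (c : C) (h : H) :
    smashP k H C ρ (c ⊗ₜ[k] h) = P0 k H C (ρ c ⊗ₜ[k] δ h) := by
  simp [smashP, P0]

theorem smashComul_tmul (ρ : C →ₗ[k] H ⊗[k] C) (c : C) (h : H) :
    smashComul k H C ρ (c ⊗ₜ[k] h)
      = K0 k H C ((TensorProduct.map LinearMap.id ρ) (δC c) ⊗ₜ[k] δ h) := by
  simp [smashComul, K0]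

theorem GL1 (ρ : C →ₗ[k] H ⊗[k] C) (x : H ⊗[k] C) (y : H ⊗[k] H) :
    smashComul k H C ρ (P0 k H C (x ⊗ₜ[k] y))
      = F1 k H C
          ((TensorProduct.map LinearMap.id (TensorProduct.map LinearMap.id ρ ∘ₗ δC)) x
            ⊗ₜ[k] (TensorProduct.map LinearMap.id δ) y) := by
  induction x using TensorProduct.induction_on with
  | zero => simp
  | add a b ha hb => simp only [map_add, add_tmul, tmul_add, ha, hb]
  | tmul a d =>
    induction y using TensorProduct.induction_on with
    | zero => simp
    | add a b ha hb => simp only [map_add, add_tmul, tmul_add, ha, hb]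
    | tmul g g' =>
      rw [P0_tmul, map_smul, smashComul_tmul]
      simp [F1_tmul]

theorem SL2 (ρ : C →ₗ[k] H ⊗[k] C) (w : (H ⊗[k] C) ⊗[k] (H ⊗[k] C)) :
    TensorProduct.map LinearMap.id (TensorProduct.map LinearMap.id ρ) (mixHC k H C w)
      = N1 k H C (TensorProduct.map LinearMap.id (TensorProduct.map LinearMap.id ρ) w) := by
  induction w using TensorProduct.induction_on with
  | zero => simp
  | add a b ha hb => simp only [map_add, ha, hb]
  | tmul p q =>
    induction p using TensorProduct.induction_on with
    | zero => simp
    | add a b ha hb => simp only [map_add, add_tmul, tmul_add, ha, hb]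
    | tmul b u =>
      induction q using TensorProduct.induction_on with
      | zero => simp
      | add a b ha hb => simp only [map_add, add_tmul, tmul_add, ha, hb]
      | tmul e v2 => simp [mixHC, N1]

theorem GR1 (ρ : C →ₗ[k] H ⊗[k] C) (u : C ⊗[k] (H ⊗[k] C)) (y : H ⊗[k] H) :
    TensorProduct.map (smashP k H C ρ) (smashP k H C ρ) (K0 k H C (u ⊗ₜ[k] y))
      = TensorProduct.map (P0 k H C) (P0 k H C)
          ((TensorProduct.map (TensorProduct.map LinearMap.id (δ ∘ₗ μ))
              (TensorProduct.map LinearMap.id δ))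
            (Wm k H C ((TensorProduct.map ρ (TensorProduct.map LinearMap.id ρ)) u ⊗ₜ[k] y))) := by
  induction u using TensorProduct.induction_on with
  | zero => simp
  | add a b ha hb => simp only [map_add, add_tmul, tmul_add, ha, hb]
  | tmul d w =>
    induction w using TensorProduct.induction_on with
    | zero => simp
    | add a b ha hb => simp only [map_add, add_tmul, tmul_add, ha, hb]
    | tmul b v =>
      induction y using TensorProduct.induction_on with
      | zero => simp
      | add a b ha hb => simp only [map_add, add_tmul, tmul_add, ha, hb]
      | tmul g g' =>
        rw [K0_tmul]
        simp [smashP_tmul, Wm_tmul]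

theorem P2a (hmul : ∀ a b : H, δ (a * b) = δ a * δ b) (b : H) (u v : C) (p q : H ⊗[k] H) :
    TensorProduct.map (P0 k H C) (P0 k H C)
        ((TensorProduct.map (TensorProduct.map LinearMap.id (δ ∘ₗ μ))
            (TensorProduct.map LinearMap.id δ))
          (Wm k H C (((b ⊗ₜ[k] u) ⊗ₜ[k] (TensorProduct.assoc k H H C (p ⊗ₜ[k] v))) ⊗ₜ[k] q)))
      = Jmap k H C b u v
          ((TensorProduct.map δ LinearMap.id) p ⊗ₜ[k] (TensorProduct.map δ δ) q) := by
  induction p using TensorProduct.induction_on with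
  | zero => simp
  | add a b ha hb => simp only [map_add, add_tmul, tmul_add, ha, hb]
  | tmul x y =>
    induction q using TensorProduct.induction_on with
    | zero => simp
    | add a b ha hb => simp only [map_add, add_tmul, tmul_add, ha, hb]
    | tmul g g' =>
      simp only [assoc_tmul, map_tmul, Wm_tmul, Jmap_tmul, LinearMap.id_coe, id_eq,
        LinearMap.coe_comp, Function.comp_apply, LinearMap.mul'_apply, hmul x g]

theorem FIN (hmul : ∀ a b : H, δ (a * b) = δ a * δ b)
    (z : (H ⊗[k] C) ⊗[k] (H ⊗[k] C)) (h : H) :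
    F1 k H C
        (N1 k H C ((TensorProduct.map LinearMap.id
            ((TensorProduct.assoc k H H C).toLinearMap ∘ₗ TensorProduct.map δ LinearMap.id)) z)
          ⊗ₜ[k] (TensorProduct.map LinearMap.id δ) (δ h))
      = TensorProduct.map (P0 k H C) (P0 k H C)
          ((TensorProduct.map (TensorProduct.map LinearMap.id (δ ∘ₗ μ))
              (TensorProduct.map LinearMap.id δ))
            (Wm k H C ((TensorProduct.map LinearMap.id
                ((TensorProduct.assoc k H H C).toLinearMap ∘ₗ TensorProduct.map δ LinearMap.id)) z
              ⊗ₜ[k] δ h))) := by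
  induction z using TensorProduct.induction_on with
  | zero => simp
  | add a b ha hb => simp only [map_add, add_tmul, tmul_add, ha, hb]
  | tmul p' q' =>
    induction p' using TensorProduct.induction_on with
    | zero => simp
    | add a b ha hb => simp only [map_add, add_tmul, tmul_add, ha, hb]
    | tmul b u =>
      induction q' using TensorProduct.induction_on with
      | zero => simp
      | add a b ha hb => simp only [map_add, add_tmul, tmul_add, ha, hb]
      | tmul a v =>
        have e0 : (TensorProduct.map LinearMap.id
              ((TensorProduct.assoc k H H C).toLinearMap ∘ₗ TensorProduct.map δ LinearMap.id))
              ((b ⊗ₜ[k] u) ⊗ₜ[k] (a ⊗ₜ[k] v))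
            = (b ⊗ₜ[k] u) ⊗ₜ[k] (TensorProduct.assoc k H H C (δ a ⊗ₜ[k] v)) := by
          simp
        rw [e0, P2a k H C hmul b u v (δ a) (δ h), gamma_assemble k H C hmul b u v a h,
          Imap_tmul k H C b u v (δ a) ((TensorProduct.map LinearMap.id δ) (δ h))]

theorem main_assembly (hmul : ∀ a b : H, δ (a * b) = δ a * δ b)
    (ρ : C →ₗ[k] H ⊗[k] C) (hCC2 : CC2 k H C ρ) (hCC3 : CC3 k H C ρ) (c : C) (h : H) :
    smashComul k H C ρ (smashP k H C ρ (c ⊗ₜ[k] h))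
      = TensorProduct.map (smashP k H C ρ) (smashP k H C ρ)
          (smashComul k H C ρ (c ⊗ₜ[k] h)) := by
  have CC3m : (TensorProduct.map LinearMap.id ρ) ∘ₗ ρ
      = (TensorProduct.assoc k H H C).toLinearMap ∘ₗ TensorProduct.map δ LinearMap.id ∘ₗ ρ :=
    LinearMap.ext fun c' => by simpa using hCC3 c'
  have key : ∀ W : C ⊗[k] C,
      TensorProduct.map LinearMap.id (TensorProduct.map LinearMap.id ρ)
        ((TensorProduct.map ρ ρ) W)
      = (TensorProduct.map LinearMap.id
          ((TensorProduct.assoc k H H C).toLinearMap ∘ₗ TensorProduct.map δ LinearMap.id))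
          ((TensorProduct.map ρ ρ) W) := by
    intro W
    rw [mapmap, mapmap]
    simp only [LinearMap.id_comp, LinearMap.comp_id]
    rw [CC3m]
    simp only [LinearMap.comp_assoc]
  rw [smashP_tmul, GL1]
  have lhs1 : (TensorProduct.map LinearMap.id (TensorProduct.map LinearMap.id ρ ∘ₗ δC)) (ρ c)
      = N1 k H C ((TensorProduct.map LinearMap.id
          ((TensorProduct.assoc k H H C).toLinearMap ∘ₗ TensorProduct.map δ LinearMap.id))
          ((TensorProduct.map ρ ρ) (δC c))) := by
    have e1 : (TensorProduct.map LinearMap.id (TensorProduct.map LinearMap.id ρ ∘ₗ δC)) (ρ c)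
        = TensorProduct.map LinearMap.id (TensorProduct.map LinearMap.id ρ)
            (TensorProduct.map LinearMap.id δC (ρ c)) := by
      rw [mapmap]; simp
    rw [e1, hCC2 c, SL2, key]
  rw [lhs1, smashComul_tmul, GR1]
  have rhs1 : (TensorProduct.map ρ (TensorProduct.map LinearMap.id ρ))
        ((TensorProduct.map LinearMap.id ρ) (δC c))
      = (TensorProduct.map LinearMap.id
          ((TensorProduct.assoc k H H C).toLinearMap ∘ₗ TensorProduct.map δ LinearMap.id))
          ((TensorProduct.map ρ ρ) (δC c)) := by
    rw [mapmap]
    simp only [LinearMap.comp_id]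
    rw [← key (δC c)]
    rw [mapmap]; simp
  rw [rhs1]
  exact FIN k H C hmul ((TensorProduct.map ρ ρ) (δC c)) h

end SmashAux


noncomputable section
variable (k : Type*) [Field k]
variable (H : Type*) [Ring H] [Algebra k H] [Coalgebra k H]
variable (C : Type*) [AddCommGroup C] [Module k C] [Coalgebra k C]

/-- `Δ̃(P(c ⊗ h)) = (P ⊗ P)(Δ̃(c ⊗ h))`, i.e. `Δ̃(c × h) = (c₁ × c₂⁽⁻¹⁾h₁) ⊗ (c₂⁽⁰⁾ × h₂)`. -/
theorem smashComul_smashP (S : H →ₗ[k] H) (hH : IsWeakHopfAlgebra k H S)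
    (ρ : C →ₗ[k] H ⊗[k] C) (hρ : IsComoduleCoalgebra k H C ρ) :
    ∀ (c : C) (h : H),
      smashComul k H C ρ (smashP k H C ρ (c ⊗ₜ[k] h))
        = TensorProduct.map (smashP k H C ρ) (smashP k H C ρ)
            (smashComul k H C ρ (c ⊗ₜ[k] h)) := by
  intro c h
  exact main_assembly k H C hH.1.1 ρ hρ.2.1 hρ.2.2.1 c h

end
end
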